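/- arXiv:0906.4815 — 5 statements merged into one kernel-verified Lean document; each statement's English description precedes it below -/
import Mathlib

section
/- There exist constants c, C > 0 such that for all z ∈ ℂ, c · e^{φ(z)} · dist(z,Λ)/|z|^{3/2} ≤ |E(z)| ≤ C · e^{φ(z)} · dist(z,Λ)/|z|^{3/2} for |z| large, where Λ = {λ_n} and dist(z,Λ) = inf_n |z - λ_n|. -/
open Complex

private lemma aux_one_sub (x : ℝ) (h0 : 0 ≤ x) (h1 : x ≤ 4/5) :
    Real.exp (-(5*x)) ≤ 1 - x := by
  have h5 : 1 + 5*x ≤ Real.exp (5*x) := by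
    have := Real.add_one_le_exp (5*x); linarith
  have hp : 0 < 1 + 5*x := by linarith
  rw [Real.exp_neg]
  have h2 : (Real.exp (5*x))⁻¹ ≤ (1 + 5*x)⁻¹ := by
    apply inv_anti₀ hp h5
  refine le_trans h2 ?_
  rw [inv_eq_one_div, div_le_iff₀ hp]
  nlinarith

private lemma aux_quarter : Real.exp (-(1/4 : ℝ)) ≤ 4/5 := by
  have h : (5/4 : ℝ) ≤ Real.exp (1/4) := by
    have := Real.add_one_le_exp (1/4 : ℝ); linarith
  rw [Real.exp_neg]
  calc (Real.exp (1/4:ℝ))⁻¹ ≤ (5/4 : ℝ)⁻¹ := by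
        apply inv_anti₀ (by norm_num) h
    _ = 4/5 := by norm_num

private lemma aux_half : Real.exp (-(1/2 : ℝ)) ≤ 2/3 := by
  have h : (3/2 : ℝ) ≤ Real.exp (1/2) := by
    have := Real.add_one_le_exp (1/2 : ℝ); linarith
  rw [Real.exp_neg]
  calc (Real.exp (1/2:ℝ))⁻¹ ≤ (3/2 : ℝ)⁻¹ := by
        apply inv_anti₀ (by norm_num) h
    _ = 2/3 := by norm_num

private lemma aux_geom_summable : Summable (fun j : ℕ => Real.exp (-(1/2:ℝ)) ^ j) :=
  summable_geometric_of_lt_one (le_of_lt (Real.exp_pos _)) (by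
    calc Real.exp (-(1/2:ℝ)) ≤ 2/3 := aux_half
    _ < 1 := by norm_num)

private lemma aux_geom_tsum : (∑' j : ℕ, Real.exp (-(1/2:ℝ)) ^ j) ≤ 3 := by
  rw [tsum_geometric_of_lt_one (le_of_lt (Real.exp_pos _)) (by
    calc Real.exp (-(1/2:ℝ)) ≤ 2/3 := aux_half
    _ < 1 := by norm_num)]
  have h : (1/3 : ℝ) ≤ 1 - Real.exp (-(1/2:ℝ)) := by
    have := aux_half; linarith
  calc (1 - Real.exp (-(1/2:ℝ)))⁻¹ ≤ (1/3 : ℝ)⁻¹ := by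
        apply inv_anti₀ (by norm_num) h
    _ = 3 := by norm_num

private lemma aux_exp_pow (j : ℕ) : Real.exp (-(j:ℝ)/2) = Real.exp (-(1/2:ℝ)) ^ j := by
  rw [← Real.exp_nat_mul]; ring_nf

private lemma aux_geom_sum (N : ℕ) :
    ∑ j ∈ Finset.range N, Real.exp (-(j:ℝ)/2) ≤ 3 := by
  calc ∑ j ∈ Finset.range N, Real.exp (-(j:ℝ)/2)
      = ∑ j ∈ Finset.range N, Real.exp (-(1/2:ℝ)) ^ j := by
        exact Finset.sum_congr rfl (fun j _ => aux_exp_pow j)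
    _ ≤ ∑' j : ℕ, Real.exp (-(1/2:ℝ)) ^ j := by
        exact Summable.sum_le_tsum _ (fun i _ => pow_nonneg (le_of_lt (Real.exp_pos _)) i)
          aux_geom_summable
    _ ≤ 3 := aux_geom_tsum

private lemma aux_gauss (K : ℕ) : ∑ n ∈ Finset.range K, ((n:ℝ)+1) = K*(K+1)/2 := by
  induction K with
  | zero => simp
  | succ k ih =>
    rw [Finset.sum_range_succ, ih]
    push_cast
    ring

private lemma aux_log_upper (g : ℝ) :
    Real.log (1 + Real.exp g) ≤ max g 0 + Real.exp (-|g|) := by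
  rcases le_or_gt 0 g with hg | hg
  · rw [_root_.abs_of_nonneg hg, max_eq_left hg]
    have h1 : 1 + Real.exp g = Real.exp g * (1 + Real.exp (-g)) := by
      rw [mul_add, mul_one, ← Real.exp_add]; simp [add_comm]
    rw [h1, Real.log_mul (by positivity) (by positivity), Real.log_exp]
    have := Real.log_le_sub_one_of_pos (show (0:ℝ) < 1 + Real.exp (-g) by positivity)
    linarith
  · rw [_root_.abs_of_neg hg, max_eq_right (le_of_lt hg)]
    have := Real.log_le_sub_one_of_pos (show (0:ℝ) < 1 + Real.exp g by positivity)
    have h2 : Real.exp (- -g) = Real.exp g := by ring_nf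
    rw [h2]; linarith

private lemma aux_a_lower (g : ℝ) (hg : 1/4 ≤ |g|) :
    Real.exp (max g 0 - 5 * Real.exp (-|g|)) ≤ |1 - Real.exp g| := by
  rcases le_or_gt 0 g with h0 | h0
  · rw [_root_.abs_of_nonneg h0] at hg ⊢
    rw [max_eq_left h0]
    have hx : Real.exp (-g) ≤ 4/5 := by
      calc Real.exp (-g) ≤ Real.exp (-(1/4:ℝ)) := by
            apply Real.exp_le_exp.mpr; linarith
        _ ≤ 4/5 := aux_quarter
    have h1 : 1 ≤ Real.exp g := Real.one_le_exp h0
    have habs : |1 - Real.exp g| = Real.exp g * (1 - Real.exp (-g)) := by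
      rw [_root_.abs_of_nonpos (by linarith), mul_sub, mul_one, ← Real.exp_add]
      simp
    rw [habs, Real.exp_sub]
    have := aux_one_sub (Real.exp (-g)) (le_of_lt (Real.exp_pos _)) hx
    calc Real.exp g / Real.exp (5 * Real.exp (-g))
        = Real.exp g * (Real.exp (5 * Real.exp (-g)))⁻¹ := by ring
      _ = Real.exp g * Real.exp (-(5 * Real.exp (-g))) := by rw [← Real.exp_neg]
      _ ≤ Real.exp g * (1 - Real.exp (-g)) := by
          apply mul_le_mul_of_nonneg_left this (le_of_lt (Real.exp_pos _))
  · rw [_root_.abs_of_neg h0] at hg ⊢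
    rw [max_eq_right (le_of_lt h0)]
    have hx : Real.exp g ≤ 4/5 := by
      calc Real.exp g ≤ Real.exp (-(1/4:ℝ)) := by
            apply Real.exp_le_exp.mpr; linarith
        _ ≤ 4/5 := aux_quarter
    have habs : |1 - Real.exp g| = 1 - Real.exp g := by
      rw [_root_.abs_of_nonneg]
      have : Real.exp g < 1 := lt_of_le_of_lt hx (by norm_num)
      linarith
    rw [habs, zero_sub]
    have := aux_one_sub (Real.exp g) (le_of_lt (Real.exp_pos _)) hx
    calc Real.exp (-(5 * Real.exp (- -g))) = Real.exp (-(5 * Real.exp g)) := by ring_nf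
      _ ≤ 1 - Real.exp g := this
set_option maxHeartbeats 2000000 in
/-- `|E(z)| ≍ e^{φ(z)} dist(z,Λ)/|z|^{3/2}` for large `|z|`, where
`φ(z) = (log⁺|z|)²`, `λ_n = exp((n+1)/2 + iθ_n)` and `E(z) = ∏ (1 - z/λ_n)`. -/
theorem product_modulus_estimate (θ : ℕ → ℝ)
    (lam : ℕ → ℂ) (hlam : ∀ n, lam n = Complex.exp (((n + 1 : ℝ) / 2 : ℂ) + (θ n : ℂ) * Complex.I))
    (φ : ℂ → ℝ) (hφ : ∀ z, φ z = (max (Real.log (‖z‖)) 0) ^ 2)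
    (E : ℂ → ℂ) (hE : ∀ z, E z = ∏' n : ℕ, (1 - z / lam n))
    (d : ℂ → ℝ) (hd : ∀ z, d z = ⨅ n : ℕ, ‖z - lam n‖) :
    ∃ c C R : ℝ, 0 < c ∧ 0 < C ∧ 0 < R ∧ ∀ z : ℂ, R ≤ ‖z‖ →
      c * Real.exp (φ z) * d z / (‖z‖) ^ ((3 : ℝ) / 2) ≤ ‖E z‖ ∧
      ‖E z‖ ≤ C * Real.exp (φ z) * d z / (‖z‖) ^ ((3 : ℝ) / 2) := by
  refine ⟨Real.exp (-40), Real.exp 40, Real.exp 8, Real.exp_pos _, Real.exp_pos _,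
    Real.exp_pos _, ?_⟩
  intro z hz
  have hr0 : 0 < ‖z‖ := lt_of_lt_of_le (Real.exp_pos 8) hz
  set r : ℝ := ‖z‖ with hrdef
  set L : ℝ := Real.log r with hLdef
  have hL : 8 ≤ L := (Real.le_log_iff_exp_le hr0).mpr hz
  have hrL : r = Real.exp L := (Real.exp_log hr0).symm
  have hlamne : ∀ n, lam n ≠ 0 := fun n => by rw [hlam n]; exact Complex.exp_ne_zero _
  have hrho : ∀ n : ℕ, ‖lam n‖ = Real.exp (((n:ℝ)+1)/2) := by
    intro n
    rw [hlam n, Complex.norm_exp]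
    norm_num
  set g : ℕ → ℝ := fun n => L - ((n:ℝ)+1)/2 with hgdef
  have hzlam : ∀ n : ℕ, ‖z / lam n‖ = Real.exp (g n) := by
    intro n
    rw [norm_div, hrho n, ← hrdef, hrL, ← Real.exp_sub]
  set a : ℕ → ℝ := fun n => ‖1 - z / lam n‖ with hadef
  have ha_eq : ∀ n, a n = ‖z - lam n‖ / Real.exp (((n:ℝ)+1)/2) := by
    intro n
    rw [← hrho n]
    have h1 : (1 : ℂ) - z / lam n = (lam n - z) / lam n := by
      field_simp [hlamne n]
    show ‖1 - z / lam n‖ = _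
    rw [h1, norm_div, norm_sub_rev]
  have haup : ∀ n, a n ≤ 1 + Real.exp (g n) := by
    intro n
    calc a n = ‖(1:ℂ) - z/lam n‖ := rfl
      _ ≤ ‖(1:ℂ)‖ + ‖z/lam n‖ := norm_sub_le _ _
      _ = 1 + Real.exp (g n) := by rw [norm_one, hzlam n]
  have halow : ∀ n, |1 - Real.exp (g n)| ≤ a n := by
    intro n
    calc |1 - Real.exp (g n)| = |‖(1:ℂ)‖ - ‖z/lam n‖| := by
          rw [norm_one, hzlam n]
      _ ≤ ‖(1:ℂ) - z/lam n‖ := abs_norm_sub_norm_le _ _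
      _ = a n := rfl
  have hbdd : BddBelow (Set.range fun n : ℕ => ‖z - lam n‖) :=
    ⟨0, by rintro x ⟨k, rfl⟩; exact norm_nonneg _⟩
  have hdle : ∀ n, d z ≤ ‖z - lam n‖ := by
    intro n; rw [hd]; exact ciInf_le hbdd n
  have hdnn : 0 ≤ d z := by
    rw [hd]; exact le_ciInf fun n => norm_nonneg _
  have hdlow : ∀ n : ℕ, d z / Real.exp (((n:ℝ)+1)/2) ≤ a n := by
    intro n
    rw [ha_eq n]
    exact (div_le_div_iff_of_pos_right (Real.exp_pos _)).mpr (hdle n)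
  have hdub : d z ≤ 2 * r := by
    calc d z ≤ ‖z - lam 0‖ := hdle 0
      _ ≤ ‖z‖ + ‖lam 0‖ := by exact norm_sub_le _ _
      _ = r + Real.exp ((0+1)/2) := by
          rw [hrho 0, ← hrdef]; norm_num
      _ ≤ r + r := by
          have : Real.exp ((0+1)/2 : ℝ) ≤ Real.exp L := Real.exp_le_exp.mpr (by norm_num; linarith)
          rw [hrL]; norm_num at this ⊢; linarith
      _ = 2 * r := by ring
  set K : ℕ := ⌊2*L⌋₊ with hKdef
  set M : ℕ := K + 6 with hMdef
  have hK1 : (K:ℝ) ≤ 2*L := Nat.floor_le (by linarith)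
  have hK2 : 2*L < (K:ℝ) + 1 := Nat.lt_floor_add_one _
  have hMr : (M:ℝ) = (K:ℝ) + 6 := by rw [hMdef]; push_cast; ring
  have hgM : ∀ n, M ≤ n → g n ≤ -3 := by
    intro n hn
    have h1 : (M:ℝ) ≤ n := Nat.cast_le.mpr hn
    simp only [hgdef]
    rw [hMr] at h1
    linarith
  -- tail estimates
  have htail_norm : ∀ n : ℕ, Real.exp (g (n + M)) ≤ Real.exp (-3) * Real.exp (-(1/2:ℝ)) ^ n := by
    intro n
    rw [← aux_exp_pow, ← Real.exp_add]
    apply Real.exp_le_exp.mpr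
    have h1 := hgM M le_rfl
    simp only [hgdef] at h1 ⊢
    push_cast
    linarith
  have hexp3 : Real.exp (-3 : ℝ) ≤ 1/2 := by
    rw [Real.exp_neg]
    have h1 : (2:ℝ) ≤ Real.exp 3 := by have := Real.add_one_le_exp (3:ℝ); linarith
    calc (Real.exp 3)⁻¹ ≤ (2:ℝ)⁻¹ := inv_anti₀ (by norm_num) h1
      _ = 1/2 := by norm_num
  have htail_half : ∀ n : ℕ, Real.exp (g (n + M)) ≤ 1/2 := by
    intro n
    calc Real.exp (g (n + M)) ≤ Real.exp (-3) := Real.exp_le_exp.mpr (hgM _ (Nat.le_add_left _ _))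
      _ ≤ 1/2 := hexp3
  have hFne : ∀ n : ℕ, (1 : ℂ) - z / lam (n + M) ≠ 0 := by
    intro n h
    have h1 : z / lam (n + M) = 1 := by
      have := sub_eq_zero.mp h; exact this.symm
    have h2 := hzlam (n + M)
    rw [h1] at h2
    simp at h2
    have := htail_half n
    rw [← h2] at this
    norm_num at this
  have hlogsum : Summable fun n : ℕ => Complex.log (1 - z / lam (n + M)) := by
    apply Summable.of_norm_bounded
      (g := fun n => (3/2) * (Real.exp (-3) * Real.exp (-(1/2:ℝ)) ^ n))
      ((aux_geom_summable.mul_left _).mul_left _)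
    intro n
    have h1 : ‖-(z / lam (n+M))‖ ≤ 1/2 := by
      rw [norm_neg, hzlam]; exact htail_half n
    calc ‖Complex.log (1 - z/lam (n+M))‖
        = ‖Complex.log (1 + -(z/lam (n+M)))‖ := by rw [sub_eq_add_neg]
      _ ≤ (3/2) * ‖-(z/lam (n+M))‖ := Complex.norm_log_one_add_half_le_self h1
      _ ≤ (3/2) * (Real.exp (-3) * Real.exp (-(1/2:ℝ)) ^ n) := by
          apply mul_le_mul_of_nonneg_left ?_ (by norm_num)
          rw [norm_neg, hzlam]
          exact htail_norm n
  have hmultail : Multipliable fun n : ℕ => 1 - z / lam (n + M) :=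
    Complex.multipliable_of_summable_log hlogsum
  have hmul : Multipliable fun n : ℕ => 1 - z / lam n :=
    Multipliable.comp_nat_add (f := fun n : ℕ => 1 - z / lam n) (k := M) hmultail
  set b : ℕ → ℝ := fun n => Real.log (a n) with hbdef
  have htail_low : ∀ n : ℕ, 1 - Real.exp (g (n + M)) ≤ a (n + M) := by
    intro n
    have := halow (n + M)
    rw [_root_.abs_of_nonneg (by linarith [htail_half n])] at this
    exact this
  have hbtail_abs : ∀ n : ℕ, |b (n + M)| ≤ 5 * (Real.exp (-3) * Real.exp (-(1/2:ℝ)) ^ n) := by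
    intro n
    have hx0 : 0 < Real.exp (g (n+M)) := Real.exp_pos _
    have hx2 : Real.exp (g (n+M)) ≤ 1/2 := htail_half n
    have hup := haup (n+M)
    have hlo := htail_low n
    have hpos : 0 < a (n+M) := by linarith
    have h3 := htail_norm n
    rw [abs_le]; constructor
    · have h1 : Real.exp (-(5 * Real.exp (g (n+M)))) ≤ 1 - Real.exp (g (n+M)) :=
        aux_one_sub _ (le_of_lt hx0) (by linarith)
      have h2 : Real.exp (-(5 * Real.exp (g (n+M)))) ≤ a (n+M) := le_trans h1 hlo
      have h4 := (Real.le_log_iff_exp_le hpos).mpr h2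
      show -(5 * (Real.exp (-3) * Real.exp (-(1/2:ℝ)) ^ n)) ≤ Real.log (a (n+M))
      linarith
    · have h1 : Real.log (a (n+M)) ≤ Real.log (1 + Real.exp (g (n+M))) :=
        Real.log_le_log hpos hup
      have h2 : Real.log (1 + Real.exp (g (n+M))) ≤ Real.exp (g (n+M)) := by
        have := Real.log_le_sub_one_of_pos (show (0:ℝ) < 1 + Real.exp (g (n+M)) by linarith)
        linarith
      show Real.log (a (n+M)) ≤ 5 * (Real.exp (-3) * Real.exp (-(1/2:ℝ)) ^ n)
      have h4 : (0:ℝ) ≤ Real.exp (-3) * Real.exp (-(1/2:ℝ)) ^ n := by positivity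
      linarith
  have hbtailsum : Summable fun n : ℕ => b (n + M) := by
    apply Summable.of_norm_bounded ((aux_geom_summable.mul_left (Real.exp (-3))).mul_left 5)
    intro n; rw [Real.norm_eq_abs]; exact hbtail_abs n
  set T : ℝ := ∑' n : ℕ, b (n + M) with hTdef
  have he3 : (8:ℝ) ≤ Real.exp 3 := by
    have h1 : (2:ℝ) ≤ Real.exp 1 := by have := Real.add_one_le_exp (1:ℝ); linarith
    have h2 : Real.exp (3:ℝ) = Real.exp 1 ^ (3:ℕ) := by
      rw [← Real.exp_nat_mul]; norm_num
    have h3 := pow_le_pow_left₀ (by norm_num : (0:ℝ) ≤ 2) h1 3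
    rw [h2]; norm_num at h3; linarith
  have hT : |T| ≤ 2 := by
    have h1 : ‖T‖ ≤ ∑' n : ℕ, ‖b (n + M)‖ := norm_tsum_le_tsum_norm (by
      apply Summable.of_norm_bounded ((aux_geom_summable.mul_left (Real.exp (-3))).mul_left 5)
      intro n; rw [norm_norm, Real.norm_eq_abs]; exact hbtail_abs n)
    have h2 : ∑' n : ℕ, ‖b (n + M)‖ ≤ ∑' n : ℕ, 5 * (Real.exp (-3) * Real.exp (-(1/2:ℝ)) ^ n) := by
      apply Summable.tsum_le_tsum ?_ ?_ ((aux_geom_summable.mul_left (Real.exp (-3))).mul_left 5)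
      · intro n; rw [Real.norm_eq_abs]; exact hbtail_abs n
      · apply Summable.of_norm_bounded ((aux_geom_summable.mul_left (Real.exp (-3))).mul_left 5)
        intro n; rw [norm_norm, Real.norm_eq_abs]; exact hbtail_abs n
    have h3 : ∑' n : ℕ, 5 * (Real.exp (-3) * Real.exp (-(1/2:ℝ)) ^ n)
        = 5 * (Real.exp (-3) * ∑' n : ℕ, Real.exp (-(1/2:ℝ)) ^ n) := by
      rw [tsum_mul_left, tsum_mul_left]
    have h4 : ∑' n : ℕ, Real.exp (-(1/2:ℝ)) ^ n ≤ 3 := aux_geom_tsum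
    have h5 : Real.exp (-3:ℝ) ≤ 1/8 := by
      rw [Real.exp_neg]
      calc (Real.exp 3)⁻¹ ≤ (8:ℝ)⁻¹ := inv_anti₀ (by norm_num) he3
        _ = 1/8 := by norm_num
    have h6 : 5 * (Real.exp (-3) * ∑' n : ℕ, Real.exp (-(1/2:ℝ)) ^ n) ≤ 2 := by
      have hge : (0:ℝ) ≤ ∑' n : ℕ, Real.exp (-(1/2:ℝ)) ^ n :=
        tsum_nonneg fun n => pow_nonneg (le_of_lt (Real.exp_pos _)) n
      nlinarith [Real.exp_pos (-3:ℝ)]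
    rw [Real.norm_eq_abs] at h1
    linarith
  have hexpT_low : Real.exp (-2 : ℝ) ≤ Real.exp T :=
    Real.exp_le_exp.mpr (by have := abs_le.mp hT; linarith [this.1])
  have hexpT_up : Real.exp T ≤ Real.exp 2 :=
    Real.exp_le_exp.mpr (by have := abs_le.mp hT; linarith [this.2])
  set P : ℝ := ∏ n ∈ Finset.range M, a n with hPdef
  have hPnn : 0 ≤ P :=
    Finset.prod_nonneg fun n _ => norm_nonneg _
  have habsE : ‖E z‖ = P * Real.exp T := by
    have hsplit : (∏' n : ℕ, (1 - z/lam n)) = (∏ n ∈ Finset.range M, (1 - z / lam n))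
        * (∏' n : ℕ, (1 - z / lam (n + M))) :=
      (HasProd.prod_range_mul (f := fun n : ℕ => 1 - z / lam n) (k := M)
        hmultail.hasProd).tprod_eq
    have htail_abs : ‖∏' n : ℕ, (1 - z / lam (n+M))‖ = Real.exp T := by
      rw [hmultail.norm_tprod]
      have hfun : (Real.exp ∘ fun n : ℕ => b (n + M)) = fun n : ℕ => a (n + M) := by
        funext n
        show Real.exp (Real.log (a (n + M))) = a (n + M)
        apply Real.exp_log
        have h1 := htail_half n
        have h2 := htail_low n
        linarith
      have hp : HasProd (fun n : ℕ => a (n + M)) (Real.exp T) :=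
        hfun ▸ hbtailsum.hasSum.rexp
      exact hp.tprod_eq
    rw [hE z, hsplit, norm_mul, norm_prod, htail_abs]
  -- Gauss sum facts
  set SK : ℝ := ∑ n ∈ Finset.range K, g n with hSKdef
  have hSK_eq : SK = K*L - K*(K+1)/4 := by
    rw [hSKdef]
    simp only [hgdef]
    rw [Finset.sum_sub_distrib, Finset.sum_const, Finset.card_range, nsmul_eq_mul]
    rw [show (∑ n ∈ Finset.range K, ((n:ℝ)+1)/2) = (∑ n ∈ Finset.range K, ((n:ℝ)+1))/2 from
      (Finset.sum_div _ _ _).symm, aux_gauss]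
    ring
  have hSKlow : L^2 - L/2 ≤ SK := by
    rw [hSK_eq]
    nlinarith [mul_nonneg (by linarith : (0:ℝ) ≤ 2*L - K) (by linarith : (0:ℝ) ≤ (K:ℝ)+1-2*L)]
  have hSKup : SK ≤ L^2 - L/2 + 1 := by
    rw [hSK_eq]
    nlinarith [mul_nonneg (by linarith : (0:ℝ) ≤ 2*L - K) (by linarith : (0:ℝ) ≤ (K:ℝ)+1-2*L),
      sq_nonneg (2*L - K), sq_nonneg ((K:ℝ)+1-2*L)]
  have hKM : K ≤ M := Nat.le_add_right _ _
  have hSmax_eq : ∑ n ∈ Finset.range M, max (g n) 0 = SK := by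
    rw [hSKdef, Finset.range_eq_Ico,
      ← Finset.sum_Ico_consecutive (fun n => max (g n) 0) (Nat.zero_le K) hKM]
    have h1 : ∑ n ∈ Finset.Ico 0 K, max (g n) 0 = ∑ n ∈ Finset.Ico 0 K, g n := by
      apply Finset.sum_congr rfl; intro n hn
      rw [Finset.mem_Ico] at hn
      apply max_eq_left
      have h2 : ((n:ℝ)+1) ≤ (K:ℝ) := by exact_mod_cast hn.2
      simp only [hgdef]; linarith
    have h2 : ∑ n ∈ Finset.Ico K M, max (g n) 0 = 0 := by
      apply Finset.sum_eq_zero; intro n hn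
      rw [Finset.mem_Ico] at hn
      apply max_eq_right
      have h3 : (K:ℝ) ≤ (n:ℝ) := Nat.cast_le.mpr hn.1
      simp only [hgdef]; linarith
    rw [h1, h2, add_zero, Finset.range_eq_Ico]
  have hexp6 : ∑ n ∈ Finset.range M, Real.exp (-|g n|) ≤ 6 := by
    rw [Finset.range_eq_Ico,
      ← Finset.sum_Ico_consecutive (fun n => Real.exp (-|g n|)) (Nat.zero_le K) hKM]
    have h1 : ∑ n ∈ Finset.Ico 0 K, Real.exp (-|g n|) ≤ 3 := by
      calc ∑ n ∈ Finset.Ico 0 K, Real.exp (-|g n|)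
          ≤ ∑ n ∈ Finset.Ico 0 K, Real.exp (-(((K:ℝ)-1-n)/2)) := by
            apply Finset.sum_le_sum; intro n hn
            apply Real.exp_le_exp.mpr
            rw [Finset.mem_Ico] at hn
            have hn2 : ((n:ℝ)+1) ≤ (K:ℝ) := by exact_mod_cast hn.2
            have hg0 : 0 ≤ g n := by simp only [hgdef]; linarith
            rw [_root_.abs_of_nonneg hg0]
            simp only [hgdef]; linarith
        _ = ∑ j ∈ Finset.range K, Real.exp (-(j:ℝ)/2) := by
            rw [← Finset.range_eq_Ico, ← Finset.sum_range_reflect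
              (fun j => Real.exp (-(j:ℝ)/2)) K]
            apply Finset.sum_congr rfl; intro j hj
            rw [Finset.mem_range] at hj
            congr 1
            have hc : ((K - 1 - j : ℕ) : ℝ) = (K:ℝ) - 1 - j := by
              have h4 : j ≤ K - 1 := by omega
              have h5 : 1 ≤ K := by omega
              push_cast [Nat.cast_sub h4, Nat.cast_sub h5]
              ring
            rw [hc]; ring
        _ ≤ 3 := aux_geom_sum K
    have h2 : ∑ n ∈ Finset.Ico K M, Real.exp (-|g n|) ≤ 3 := by
      calc ∑ n ∈ Finset.Ico K M, Real.exp (-|g n|)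
          ≤ ∑ n ∈ Finset.Ico K M, Real.exp (-(((n:ℝ)-K)/2)) := by
            apply Finset.sum_le_sum; intro n hn
            apply Real.exp_le_exp.mpr
            rw [Finset.mem_Ico] at hn
            have h3 : (K:ℝ) ≤ (n:ℝ) := Nat.cast_le.mpr hn.1
            have hgneg : g n ≤ 0 := by simp only [hgdef]; linarith
            rw [_root_.abs_of_nonpos hgneg]
            simp only [hgdef]; linarith
        _ = ∑ j ∈ Finset.range (M - K), Real.exp (-(j:ℝ)/2) := by
            rw [Finset.sum_Ico_eq_sum_range]
            apply Finset.sum_congr rfl; intro j hj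
            congr 1
            push_cast
            ring
        _ ≤ 3 := aux_geom_sum _
    linarith
  have haB : ∀ n, a n ≤ Real.exp (max (g n) 0 + Real.exp (-|g n|)) := by
    intro n
    calc a n ≤ 1 + Real.exp (g n) := haup n
      _ = Real.exp (Real.log (1 + Real.exp (g n))) := (Real.exp_log (by positivity)).symm
      _ ≤ _ := Real.exp_le_exp.mpr (aux_log_upper (g n))
  have halowB : ∀ n, 1/4 ≤ |g n| →
      Real.exp (max (g n) 0 - 5 * Real.exp (-|g n|)) ≤ a n := by
    intro n hn
    exact le_trans (aux_a_lower (g n) hn) (halow n)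
  have hsumB : ∑ n ∈ Finset.range M, (max (g n) 0 + Real.exp (-|g n|)) ≤ SK + 6 := by
    rw [Finset.sum_add_distrib, hSmax_eq]
    linarith
  have hPup : P ≤ Real.exp (SK + 6) := by
    calc P ≤ ∏ n ∈ Finset.range M, Real.exp (max (g n) 0 + Real.exp (-|g n|)) :=
        Finset.prod_le_prod (fun n _ => norm_nonneg _) (fun n _ => haB n)
      _ = Real.exp (∑ n ∈ Finset.range M, (max (g n) 0 + Real.exp (-|g n|))) :=
        (Real.exp_sum _ _).symm
      _ ≤ Real.exp (SK + 6) := Real.exp_le_exp.mpr hsumB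
  -- argmin
  have hargmin : ∃ m, ∀ n, ‖z - lam m‖ ≤ ‖z - lam n‖ := by
    set A := ‖z - lam 0‖ with hAdef
    set N : ℕ := ⌈2*(r + A)⌉₊ with hNdef
    have hbig : ∀ n, N ≤ n → A ≤ ‖z - lam n‖ := by
      intro n hn
      have h2 : 2*(r+A) ≤ (N:ℝ) := Nat.le_ceil _
      have h3 : (N:ℝ) ≤ n := Nat.cast_le.mpr hn
      have h1 : r + A ≤ ((n:ℝ)+1)/2 := by linarith
      have h4 : ((n:ℝ)+1)/2 + 1 ≤ Real.exp (((n:ℝ)+1)/2) := by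
        have := Real.add_one_le_exp (((n:ℝ)+1)/2); linarith
      have h5 : ‖lam n‖ - r ≤ ‖z - lam n‖ := by
        calc ‖lam n‖ - r ≤ |‖lam n‖ - ‖z‖| := by
              rw [← hrdef]; exact le_abs_self _
          _ = |‖lam n‖ - ‖z‖| := rfl
          _ ≤ ‖lam n - z‖ := abs_norm_sub_norm_le _ _
          _ = ‖z - lam n‖ := by
              rw [norm_sub_rev]
      rw [hrho n] at h5
      linarith
    obtain ⟨m, hmmem, hmmin⟩ := Finset.exists_min_image (Finset.range (N+1))
      (fun n => ‖z - lam n‖) ⟨0, Finset.mem_range.mpr (Nat.succ_pos _)⟩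
    refine ⟨m, fun n => ?_⟩
    rcases lt_or_ge n (N+1) with h | h
    · exact hmmin n (Finset.mem_range.mpr h)
    · calc ‖z - lam m‖ ≤ ‖z - lam 0‖ :=
          hmmin 0 (Finset.mem_range.mpr (Nat.succ_pos _))
        _ ≤ ‖z - lam n‖ := hbig n (by omega)
  -- rewrite the target
  have hφz : φ z = L^2 := by
    rw [hφ z, ← hrdef, ← hLdef, max_eq_left (by linarith)]
  have hgoal_rhs : ∀ u : ℝ, Real.exp u * Real.exp (φ z) * d z / r ^ ((3:ℝ)/2)
      = d z * Real.exp (L^2 + u - L * (3/2)) := by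
    intro u
    rw [hφz, Real.rpow_def_of_pos hr0, ← hLdef]
    rw [div_eq_mul_inv, ← Real.exp_neg]
    rw [show Real.exp u * Real.exp (L^2) * d z * Real.exp (-(L * (3/2)))
        = d z * (Real.exp u * Real.exp (L^2) * Real.exp (-(L * (3/2)))) from by ring]
    rw [← Real.exp_add, ← Real.exp_add]
    congr 1
    ring
  rw [habsE]
  constructor
  · -- lower bound
    rw [hgoal_rhs (-40)]
    by_cases hmid : ∃ m, |g m| < 1/4
    · obtain ⟨m, hm⟩ := hmid
      have hm1 := abs_lt.mp hm
      have hmM : m < M := by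
        have h2 : (m:ℝ) < (K:ℝ) + 1/2 := by
          have := hm1.1; simp only [hgdef] at this; linarith
        have h3 : m < K + 1 := by
          have h4 : (m:ℝ) < ((K+1 : ℕ) : ℝ) := by push_cast; linarith
          exact_mod_cast h4
        omega
      have huniq : ∀ n, n ≠ m → 1/4 ≤ |g n| := by
        intro n hne
        by_contra hcon
        push_neg at hcon
        apply hne
        have hn1 := abs_lt.mp hcon
        have hdiff : g m - g n = ((n:ℝ) - (m:ℝ))/2 := by simp only [hgdef]; ring
        rcases Nat.lt_trichotomy n m with h|h|h
        · exfalso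
          have : (n:ℝ) + 1 ≤ m := by exact_mod_cast h
          linarith [hm1.1, hm1.2, hn1.1, hn1.2]
        · exact h
        · exfalso
          have : (m:ℝ) + 1 ≤ n := by exact_mod_cast h
          linarith [hm1.1, hm1.2, hn1.1, hn1.2]
      have hsum_erase : SK - 1/4 - 30 ≤
          ∑ n ∈ (Finset.range M).erase m, (max (g n) 0 - 5 * Real.exp (-|g n|)) := by
        have he1 : ∑ n ∈ (Finset.range M).erase m, (max (g n) 0 - 5 * Real.exp (-|g n|))
            = (∑ n ∈ Finset.range M, (max (g n) 0 - 5 * Real.exp (-|g n|)))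
              - (max (g m) 0 - 5 * Real.exp (-|g m|)) :=
          Finset.sum_erase_eq_sub (Finset.mem_range.mpr hmM)
        have he2 : ∑ n ∈ Finset.range M, (max (g n) 0 - 5 * Real.exp (-|g n|))
            = SK - 5 * ∑ n ∈ Finset.range M, Real.exp (-|g n|) := by
          rw [Finset.sum_sub_distrib, hSmax_eq, ← Finset.mul_sum]
        have he3 : max (g m) 0 ≤ 1/4 := by
          apply max_le (le_of_lt hm1.2) (by norm_num)
        have he4 : 0 < Real.exp (-|g m|) := Real.exp_pos _
        rw [he1, he2]
        have := hexp6
        nlinarith [Real.exp_pos (-|g m|)]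
      have hprod_erase : Real.exp (SK - 1/4 - 30) ≤ ∏ n ∈ (Finset.range M).erase m, a n := by
        calc Real.exp (SK - 1/4 - 30)
            ≤ Real.exp (∑ n ∈ (Finset.range M).erase m,
                (max (g n) 0 - 5 * Real.exp (-|g n|))) := Real.exp_le_exp.mpr hsum_erase
          _ = ∏ n ∈ (Finset.range M).erase m,
                Real.exp (max (g n) 0 - 5 * Real.exp (-|g n|)) := Real.exp_sum _ _
          _ ≤ ∏ n ∈ (Finset.range M).erase m, a n := by
              apply Finset.prod_le_prod (fun n _ => le_of_lt (Real.exp_pos _))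
              intro n hn
              exact halowB n (huniq n (Finset.ne_of_mem_erase hn))
      have ham_low : d z * Real.exp (-(L + 1/4)) ≤ a m := by
        calc d z * Real.exp (-(L + 1/4)) ≤ d z * Real.exp (-(((m:ℝ)+1)/2)) := by
              apply mul_le_mul_of_nonneg_left ?_ hdnn
              apply Real.exp_le_exp.mpr
              have := hm1.1; simp only [hgdef] at this; linarith
          _ = d z / Real.exp (((m:ℝ)+1)/2) := by
              rw [Real.exp_neg]; exact (div_eq_mul_inv _ _).symm
          _ ≤ a m := hdlow m
      have hP1 : d z * Real.exp (-(L + 1/4)) * Real.exp (SK - 1/4 - 30) ≤ P := by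
        rw [hPdef, ← Finset.mul_prod_erase _ a (Finset.mem_range.mpr hmM)]
        apply mul_le_mul ham_low hprod_erase (le_of_lt (Real.exp_pos _))
          (norm_nonneg _)
      calc d z * Real.exp (L^2 + (-40) - L * (3/2))
          ≤ d z * (Real.exp (-(L + 1/4)) * Real.exp (SK - 1/4 - 30) * Real.exp (-2)) := by
            apply mul_le_mul_of_nonneg_left ?_ hdnn
            rw [← Real.exp_add, ← Real.exp_add]
            apply Real.exp_le_exp.mpr
            linarith
        _ = (d z * Real.exp (-(L + 1/4)) * Real.exp (SK - 1/4 - 30)) * Real.exp (-2) := by ring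
        _ ≤ P * Real.exp T := mul_le_mul hP1 hexpT_low (le_of_lt (Real.exp_pos _)) hPnn
    · push_neg at hmid
      have hP2 : Real.exp (SK - 30) ≤ P := by
        calc Real.exp (SK - 30)
            ≤ Real.exp (∑ n ∈ Finset.range M, (max (g n) 0 - 5 * Real.exp (-|g n|))) := by
              apply Real.exp_le_exp.mpr
              rw [Finset.sum_sub_distrib, hSmax_eq, ← Finset.mul_sum]
              linarith
          _ = ∏ n ∈ Finset.range M, Real.exp (max (g n) 0 - 5 * Real.exp (-|g n|)) :=
            Real.exp_sum _ _
          _ ≤ P := by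
              apply Finset.prod_le_prod (fun n _ => le_of_lt (Real.exp_pos _))
              intro n _
              exact halowB n (hmid n)
      have h2e : (2:ℝ) ≤ Real.exp 1 := by have := Real.add_one_le_exp (1:ℝ); linarith
      calc d z * Real.exp (L^2 + (-40) - L * (3/2))
          ≤ (2 * Real.exp L) * Real.exp (L^2 + (-40) - L * (3/2)) := by
            apply mul_le_mul_of_nonneg_right ?_ (le_of_lt (Real.exp_pos _))
            rw [hrL] at hdub; exact hdub
        _ ≤ (Real.exp 1 * Real.exp L) * Real.exp (L^2 + (-40) - L * (3/2)) := by
            apply mul_le_mul_of_nonneg_right ?_ (le_of_lt (Real.exp_pos _))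
            apply mul_le_mul_of_nonneg_right h2e (le_of_lt (Real.exp_pos _))
        _ = Real.exp (1 + L + (L^2 + (-40) - L * (3/2))) := by
            rw [Real.exp_add, Real.exp_add]
        _ ≤ Real.exp (SK - 30 + (-2)) := by
            apply Real.exp_le_exp.mpr
            linarith
        _ = Real.exp (SK - 30) * Real.exp (-2) := Real.exp_add _ _
        _ ≤ P * Real.exp T := mul_le_mul hP2 hexpT_low (le_of_lt (Real.exp_pos _)) hPnn
  · -- upper bound
    rw [hgoal_rhs 40]
    rcases lt_or_ge (d z) (r/4) with hcase | hcase
    · obtain ⟨m, hm⟩ := hargmin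
      have hdm : d z = ‖z - lam m‖ := by
        rw [hd]; exact le_antisymm (ciInf_le hbdd m) (le_ciInf hm)
      have hρr : |Real.exp (((m:ℝ)+1)/2) - r| ≤ d z := by
        rw [hdm, ← hrho m]
        calc |‖lam m‖ - r| = |‖lam m‖ - ‖z‖| := by
              rfl
          _ ≤ ‖lam m - z‖ := abs_norm_sub_norm_le _ _
          _ = ‖z - lam m‖ := by
              rw [norm_sub_rev]
      have hρb := abs_le.mp hρr
      have hρlow : 3*r/4 ≤ Real.exp (((m:ℝ)+1)/2) := by linarith [hρb.1]
      have hρhigh : Real.exp (((m:ℝ)+1)/2) ≤ 5*r/4 := by linarith [hρb.2]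
      have hmM : m < M := by
        have h54 : (5/4:ℝ) ≤ Real.exp (1/4) := by
          have := Real.add_one_le_exp (1/4:ℝ); linarith
        have h1 : Real.exp (((m:ℝ)+1)/2) ≤ Real.exp (L + 1/4) := by
          rw [Real.exp_add]
          calc Real.exp (((m:ℝ)+1)/2) ≤ 5*r/4 := hρhigh
            _ = (5/4) * Real.exp L := by rw [hrL]; ring
            _ ≤ Real.exp L * Real.exp (1/4) := by nlinarith [Real.exp_pos L]
        have h2 : ((m:ℝ)+1)/2 ≤ L + 1/4 := Real.exp_le_exp.mp h1
        have h4 : m < K + 1 := by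
          have h5 : (m:ℝ) < ((K+1 : ℕ) : ℝ) := by push_cast; linarith
          exact_mod_cast h5
        omega
      have h32 : (3/2:ℝ) ≤ Real.exp (1/2) := by
        have := Real.add_one_le_exp (1/2:ℝ); linarith
      have ham : a m ≤ d z * Real.exp (1/2 - L) := by
        rw [ha_eq m, ← hdm, div_eq_mul_inv]
        apply mul_le_mul_of_nonneg_left ?_ hdnn
        have hLe : Real.exp L ≤ (3/2) * Real.exp (((m:ℝ)+1)/2) := by
          rw [← hrL]; linarith
        have hstep : (Real.exp (((m:ℝ)+1)/2))⁻¹ ≤ Real.exp (1/2) / Real.exp L := by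
          rw [le_div_iff₀ (Real.exp_pos L), inv_mul_le_iff₀ (Real.exp_pos _)]
          nlinarith [Real.exp_pos (((m:ℝ)+1)/2)]
        rw [show Real.exp (1/2 - L) = Real.exp (1/2) / Real.exp L from Real.exp_sub _ _]
        exact hstep
      have hprod_erase_up : ∏ n ∈ (Finset.range M).erase m, a n ≤ Real.exp (SK + 6) := by
        calc ∏ n ∈ (Finset.range M).erase m, a n
            ≤ ∏ n ∈ (Finset.range M).erase m,
                Real.exp (max (g n) 0 + Real.exp (-|g n|)) :=
              Finset.prod_le_prod (fun n _ => norm_nonneg _) (fun n _ => haB n)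
          _ = Real.exp (∑ n ∈ (Finset.range M).erase m,
                (max (g n) 0 + Real.exp (-|g n|))) := (Real.exp_sum _ _).symm
          _ ≤ Real.exp (SK + 6) := by
              apply Real.exp_le_exp.mpr
              have hsub : ∑ n ∈ (Finset.range M).erase m, (max (g n) 0 + Real.exp (-|g n|))
                  ≤ ∑ n ∈ Finset.range M, (max (g n) 0 + Real.exp (-|g n|)) := by
                apply Finset.sum_le_sum_of_subset_of_nonneg (Finset.erase_subset _ _)
                intro n _ _
                positivity
              linarith
      have hPup2 : P ≤ d z * Real.exp (1/2 - L) * Real.exp (SK + 6) := by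
        rw [hPdef, ← Finset.mul_prod_erase _ a (Finset.mem_range.mpr hmM)]
        apply mul_le_mul ham hprod_erase_up
          (Finset.prod_nonneg fun n _ => norm_nonneg _) (by positivity)
      calc P * Real.exp T ≤ (d z * Real.exp (1/2 - L) * Real.exp (SK + 6)) * Real.exp 2 := by
            apply mul_le_mul hPup2 hexpT_up (le_of_lt (Real.exp_pos _)) (by positivity)
        _ = d z * (Real.exp (1/2 - L) * Real.exp (SK + 6) * Real.exp 2) := by ring
        _ ≤ d z * Real.exp (L^2 + 40 - L * (3/2)) := by
            apply mul_le_mul_of_nonneg_left ?_ hdnn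
            rw [← Real.exp_add, ← Real.exp_add]
            apply Real.exp_le_exp.mpr
            linarith
    · have he2 : Real.exp (-2:ℝ) ≤ 1/4 := by
        rw [Real.exp_neg]
        have h1 : (2:ℝ) ≤ Real.exp 1 := by have := Real.add_one_le_exp (1:ℝ); linarith
        have h2 : (4:ℝ) ≤ Real.exp 2 := by
          have h3 : Real.exp (2:ℝ) = Real.exp 1 ^ (2:ℕ) := by
            rw [← Real.exp_nat_mul]; norm_num
          rw [h3]; nlinarith
        calc (Real.exp 2)⁻¹ ≤ (4:ℝ)⁻¹ := inv_anti₀ (by norm_num) h2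
          _ = 1/4 := by norm_num
      calc P * Real.exp T ≤ Real.exp (SK + 6) * Real.exp 2 :=
            mul_le_mul hPup hexpT_up (le_of_lt (Real.exp_pos _)) (le_of_lt (Real.exp_pos _))
        _ = Real.exp (SK + 6 + 2) := (Real.exp_add _ _).symm
        _ ≤ Real.exp (-2) * Real.exp L * Real.exp (L^2 + 40 - L * (3/2)) := by
            rw [← Real.exp_add, ← Real.exp_add]
            apply Real.exp_le_exp.mpr
            linarith
        _ ≤ (r/4) * Real.exp (L^2 + 40 - L * (3/2)) := by
            apply mul_le_mul_of_nonneg_right ?_ (le_of_lt (Real.exp_pos _))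
            rw [hrL]
            calc Real.exp (-2:ℝ) * Real.exp L ≤ (1/4) * Real.exp L := by
                  apply mul_le_mul_of_nonneg_right he2 (le_of_lt (Real.exp_pos _))
              _ = Real.exp L / 4 := by ring
        _ ≤ d z * Real.exp (L^2 + 40 - L * (3/2)) := by
            apply mul_le_mul_of_nonneg_right hcase (le_of_lt (Real.exp_pos _))
end

section
/- For the weight φ(r) = (log⁺ r)^{1+δ} with 0 < δ < 1, the numbers w_n = log ∫_ℂ |z|^{2n} e^{-2φ(z)} dm(z) satisfy w_n = c (n+1)^{1+1/δ} + O(log n) as n → ∞, for some constant c > 0 depending only on δ. -/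
open MeasureTheory

open Set Real in
/-- Tangent line inequality for `t ↦ t^(1+δ)` at base point `b`. -/
lemma aux_tangent_le (δ b t : ℝ) (hδ0 : 0 < δ) (hb : 0 < b) (ht : 0 ≤ t) :
    b ^ (1+δ) + (1+δ) * b ^ δ * (t - b) ≤ t ^ (1+δ) := by
  set s : ℝ := t / b - 1 with hs_def
  have hs : -1 ≤ s := by
    have : 0 ≤ t / b := div_nonneg ht hb.le
    simp only [hs_def]; linarith
  have h1s : 0 ≤ 1 + s := by linarith
  have h := one_add_mul_self_le_rpow_one_add hs (by linarith : (1:ℝ) ≤ 1 + δ)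
  have h2 : (1 + (1+δ)*s) * b ^ (1+δ) ≤ (1+s) ^ (1+δ) * b ^ (1+δ) :=
    mul_le_mul_of_nonneg_right h (Real.rpow_nonneg hb.le _)
  have hbb : b ^ (1+δ) = b * b ^ δ := by
    rw [Real.rpow_add hb, Real.rpow_one]
  have h3 : (1+s) ^ (1+δ) * b ^ (1+δ) = t ^ (1+δ) := by
    rw [← Real.mul_rpow h1s hb.le]
    congr 1
    rw [hs_def, add_sub_cancel, div_mul_cancel₀ t hb.ne']
  have h4 : (1 + (1+δ)*s) * b ^ (1+δ) = b ^ (1+δ) + (1+δ) * b ^ δ * (t - b) := by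
    rw [hbb]
    have hsb : s * b = t - b := by rw [hs_def, sub_mul, div_mul_cancel₀ t hb.ne', one_mul]
    linear_combination ((1+δ) * b ^ δ) * hsb
  linarith [h2, h3.ge, h4.symm.le]

set_option maxHeartbeats 12000000 in
/-- For `φ(r) = (log⁺ r)^{1+δ}` with `0 < δ < 1`, the numbers
`w_n = log ∫ |z|^{2n} e^{-2φ(z)} dm(z)` satisfy
`w_n = c (n+1)^{1+1/δ} + O(log n)` as `n → ∞`. -/
theorem monomial_norm_log_asymptotics (δ : ℝ) (hδ0 : 0 < δ) (hδ1 : δ < 1)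
    (φ : ℂ → ℝ) (hφ : ∀ z, φ z = (max (Real.log ‖z‖) 0) ^ (1 + δ))
    (w : ℕ → ℝ)
    (hw : ∀ n, w n = Real.log (∫ z : ℂ, ‖z‖ ^ (2 * n) * Real.exp (-2 * φ z))) :
    ∃ c : ℝ, 0 < c ∧ ∃ C : ℝ, 0 < C ∧ ∀ n : ℕ, 2 ≤ n →
      |w n - c * ((n : ℝ) + 1) ^ (1 + 1 / δ)| ≤ C * Real.log n := by
  open Set Real in
  have hβ0 : (0:ℝ) < 1 + δ := by linarith
  set c : ℝ := 2*δ/(1+δ)^(1+1/δ) with hc_def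
  have hc : 0 < c := by positivity
  refine ⟨c, hc, ?_⟩
  have h2δ : 1 < (2:ℝ) ^ δ :=
    (Real.one_lt_rpow_iff_of_pos two_pos).2 (Or.inl ⟨one_lt_two, hδ0⟩)
  set A₀ : ℝ := min (6*((2:ℝ)^δ - 1)) 1 with hA₀_def
  have hA₀ : 0 < A₀ := lt_min (by nlinarith) one_pos
  have hA₀1 : A₀ ≤ 1 := min_le_right _ _
  set K : ℝ := 2*π*(3 + 1/A₀) with hK_def
  have hK1 : 1 ≤ K := by
    have hπ := Real.pi_gt_three
    have h1 : 0 < 1/A₀ := by positivity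
    nlinarith
  have hlogK : 0 ≤ Real.log K := Real.log_nonneg hK1
  have hlog2 : 0 < Real.log 2 := Real.log_pos one_lt_two
  refine ⟨2/δ + 2 + (Real.log K + 7)/Real.log 2, by positivity, ?_⟩
  intro n hn
  -- basic quantities
  set N : ℝ := (n:ℝ) + 1 with hN_def
  have hN3 : (3:ℝ) ≤ N := by
    have : (2:ℝ) ≤ (n:ℝ) := by exact_mod_cast hn
    simp only [hN_def]; linarith
  have hN0 : (0:ℝ) < N := by linarith
  set t₀ : ℝ := (N/(1+δ)) ^ (1/δ) with ht₀_def
  have hNβ : 1 ≤ N/(1+δ) := by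
    rw [le_div_iff₀ hβ0]; linarith
  have ht₀1 : 1 ≤ t₀ := by
    have h := Real.rpow_le_rpow (le_of_lt one_pos) hNβ (by positivity : (0:ℝ) ≤ 1/δ)
    rw [Real.one_rpow] at h
    exact h
  have ht₀0 : 0 < t₀ := by linarith
  have ht₀δ : t₀ ^ δ = N/(1+δ) := by
    rw [← Real.rpow_mul (by positivity : (0:ℝ) ≤ N/(1+δ)), one_div,
      inv_mul_cancel₀ hδ0.ne', Real.rpow_one]
  set M : ℝ := 2*N*t₀ - 2*t₀^(1+δ) with hM_def
  have htβ : t₀ ^ (1+δ) = t₀ * (N/(1+δ)) := by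
    rw [Real.rpow_add ht₀0, Real.rpow_one, ht₀δ]
  have hMpos : 0 < M := by
    rw [hM_def, htβ]
    have h1 : t₀ * (N/(1+δ)) < t₀ * N := by
      apply mul_lt_mul_of_pos_left _ ht₀0
      rw [div_lt_iff₀ hβ0]; nlinarith
    nlinarith
  have hMc : M = c * N ^ (1 + 1/δ) := by
    have hNr : N * N^(1/δ) = N^(1+1/δ) := by rw [Real.rpow_add hN0, Real.rpow_one]
    have hβr : (1+δ) * (1+δ)^(1/δ) = (1+δ)^(1+1/δ) := by
      rw [Real.rpow_add hβ0, Real.rpow_one]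
    have ht₀eq : t₀ = N^(1/δ) / (1+δ)^(1/δ) := by
      rw [ht₀_def, Real.div_rpow hN0.le hβ0.le]
    have hβp : (0:ℝ) < (1+δ)^(1/δ) := by positivity
    rw [hM_def, htβ, hc_def, ht₀eq, ← hNr, ← hβr]
    field_simp
    ring
  -- (K1) global maximum of the exponent
  have hβtδ : (1+δ) * t₀^δ = N := by rw [ht₀δ]; field_simp
  have K1 : ∀ t : ℝ, 0 ≤ t → 2*N*t - 2*t^(1+δ) ≤ M := by
    intro t ht
    have h := aux_tangent_le δ t₀ t hδ0 ht₀0 ht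
    have h2 : (1+δ)*t₀^δ*(t-t₀) = N*(t-t₀) := by rw [hβtδ]
    rw [hM_def]; linarith [h, h2]
  -- (K2) decay beyond 2*t₀
  have K2 : ∀ t : ℝ, 2*t₀ ≤ t → 2*N*t - 2*t^(1+δ) ≤ M - A₀*(t - 2*t₀) := by
    intro t ht
    have ht0 : (0:ℝ) ≤ t := by linarith
    have h := aux_tangent_le δ (2*t₀) t hδ0 (by linarith) ht0
    have hcoef : (1+δ)*(2*t₀)^δ = 2^δ * N := by
      rw [Real.mul_rpow (by norm_num : (0:ℝ) ≤ 2) ht₀0.le, ← hβtδ]; ring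
    have h' : (2*t₀)^(1+δ) + 2^δ*N*(t-2*t₀) ≤ t^(1+δ) := by
      have h2 : (1+δ)*(2*t₀)^δ*(t-2*t₀) = 2^δ*N*(t-2*t₀) := by rw [hcoef]
      linarith [h, h2]
    have hK1' := K1 (2*t₀) (by linarith)
    have ha : A₀ ≤ 2*N*(2^δ-1) := le_trans (min_le_left _ _) (by nlinarith)
    have hmul : A₀*(t-2*t₀) ≤ 2*N*(2^δ-1)*(t-2*t₀) :=
      mul_le_mul_of_nonneg_right ha (by linarith)
    linarith [h', hK1', hmul]
  -- (K3) near-maximum lower bound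
  have K3 : ∀ s : ℝ, 0 ≤ s → s ≤ 1/N → M - 6 ≤ 2*N*(t₀+s) - 2*(t₀+s)^(1+δ) := by
    intro s hs0 hs1
    have hsN : s*N ≤ 1 := (le_div_iff₀ hN0).1 hs1
    set u := s/t₀ with hu_def
    have hu0 : 0 ≤ u := by positivity
    have hut : u * t₀ = s := by rw [hu_def, div_mul_cancel₀ s ht₀0.ne']
    have hexp : (1+u)^(1+δ) ≤ (1+u)*(1+u) := by
      have h1 : (1+u)^(1+δ) ≤ (1+u)^(2:ℝ) :=
        Real.rpow_le_rpow_of_exponent_le (by linarith) (by linarith)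
      have h2 : (1+u)^(2:ℝ) = (1+u)*(1+u) := by
        rw [show (2:ℝ) = ((2:ℕ):ℝ) by norm_num, Real.rpow_natCast]; ring
      rwa [h2] at h1
    have hts : t₀ + s = t₀ * (1 + u) := by rw [← hut]; ring
    have hmulr : (t₀+s)^(1+δ) = t₀^(1+δ) * (1+u)^(1+δ) := by
      rw [hts, Real.mul_rpow ht₀0.le (by linarith)]
    have key : (t₀+s)^(1+δ) ≤ t₀^(1+δ) + 2*(u*t₀^(1+δ)) + u*(u*t₀^(1+δ)) := by
      rw [hmulr]
      nlinarith [mul_le_mul_of_nonneg_left hexp (Real.rpow_nonneg ht₀0.le (1+δ))]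
    have hutβ : u*t₀^(1+δ) = s*(N/(1+δ)) := by rw [htβ, ← hut]; ring
    have hdivle : N/(1+δ) ≤ N := div_le_self hN0.le (by linarith)
    have hsmul : s*(N/(1+δ)) ≤ s*N := mul_le_mul_of_nonneg_left hdivle hs0
    have hub : 2*(u*t₀^(1+δ)) ≤ 2*(s*N) := by rw [hutβ]; linarith [hsmul]
    have huu : u*(u*t₀^(1+δ)) ≤ 1 := by
      rw [hutβ, hu_def]
      have h1 : s/t₀ ≤ s := div_le_self hs0 ht₀1
      have h3 : s ≤ 1 := le_trans hs1 (by rw [div_le_one hN0]; linarith)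
      nlinarith
    rw [hM_def]
    linarith [key, huu, hub, hsN]
  -- the radial profile
  set F : ℝ → ℝ := fun r => r ^ (2*n) * Real.exp (-2 * (max (Real.log r) 0) ^ (1+δ)) with hF_def
  have hFmeas : Measurable F := by
    have m1 : Measurable fun r : ℝ => max (Real.log r) 0 :=
      Real.measurable_log.max measurable_const
    have m2 : Measurable fun r : ℝ => (max (Real.log r) 0)^(1+δ) :=
      (Real.continuous_rpow_const hβ0.le).measurable.comp m1
    exact (measurable_id.pow_const (2*n)).mul
      (Real.measurable_exp.comp (m2.const_mul (-2)))
  have hmeasyF : Measurable (fun y : ℝ => y * F y) := measurable_id.mul hFmeas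
  have hF0 : ∀ r : ℝ, 0 ≤ r → 0 ≤ F r := by
    intro r hr
    exact mul_nonneg (pow_nonneg hr _) (Real.exp_pos _).le
  have hFle1 : ∀ r : ℝ, 0 ≤ r → r ≤ 1 → r * F r ≤ 1 := by
    intro r h0 h1
    have hlog : max (Real.log r) 0 = 0 := max_eq_right (Real.log_nonpos h0 h1)
    have hpow : r ^ (2*n) ≤ 1 := pow_le_one₀ h0 h1
    simp only [hF_def, hlog, Real.zero_rpow hβ0.ne', mul_zero, Real.exp_zero, mul_one]
    nlinarith
  have hFexp : ∀ r : ℝ, 1 ≤ r →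
      r * F r = Real.exp (2*N*(Real.log r) - 2*(Real.log r)^(1+δ) - Real.log r) := by
    intro r hr
    have hr0 : (0:ℝ) < r := by linarith
    have hmax : max (Real.log r) 0 = Real.log r := max_eq_left (Real.log_nonneg hr)
    have hpow : r ^ (2*n+1) = Real.exp ((2*(n:ℝ)+1) * Real.log r) := by
      rw [← Real.rpow_natCast r (2*n+1), Real.rpow_def_of_pos hr0]
      congr 1
      push_cast
      ring
    calc r * F r = r^(2*n+1) * Real.exp (-2 * (Real.log r)^(1+δ)) := by
          simp only [hF_def, hmax]; ring
      _ = Real.exp ((2*(n:ℝ)+1)*Real.log r + (-2 * (Real.log r)^(1+δ))) := by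
          rw [hpow, Real.exp_add]
      _ = _ := by
          congr 1
          simp only [hN_def]
          ring
  -- polar coordinates
  set J : ℝ := ∫ y in Set.Ioi (0:ℝ), y * F y with hJ_def
  have hpolar : ∫ z : ℂ, F ‖z‖ = 2 * π * J := by
    rw [integral_fun_norm_addHaar (volume : Measure ℂ) F]
    simp only [Complex.finrank_real_complex, measureReal_def, Complex.volume_ball, smul_eq_mul, nsmul_eq_mul,
      ENNReal.ofReal_one, one_pow, one_mul, pow_one, ENNReal.coe_toReal, NNReal.coe_real_pi,
      Nat.cast_ofNat]
    rw [hJ_def]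
    norm_num
    ring
  have hIeq : (∫ z : ℂ, ‖z‖ ^ (2 * n) * Real.exp (-2 * φ z)) = 2*π*J := by
    rw [← hpolar]
    congr 1
    funext z
    simp only [hF_def, hφ]
  -- pointwise bounds
  set R : ℝ := Real.exp (2*t₀) with hR_def
  have hR1 : 1 ≤ R := Real.one_le_exp (by linarith)
  have hR0 : 0 < R := Real.exp_pos _
  have hb2 : ∀ y : ℝ, 1 ≤ y → y * F y ≤ Real.exp M * y⁻¹ := by
    intro y hy
    have hy0 : (0:ℝ) < y := by linarith
    rw [hFexp y hy]
    have h := K1 (Real.log y) (Real.log_nonneg hy)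
    calc Real.exp (2*N*(Real.log y) - 2*(Real.log y)^(1+δ) - Real.log y)
        ≤ Real.exp (M - Real.log y) := Real.exp_le_exp.2 (by linarith)
      _ = Real.exp M * y⁻¹ := by
          rw [Real.exp_sub, Real.exp_log hy0, div_eq_mul_inv]
  have hb2' : ∀ y : ℝ, 1 ≤ y → y * F y ≤ Real.exp M := by
    intro y hy
    refine le_trans (hb2 y hy) ?_
    have h2 : y⁻¹ ≤ 1 := inv_le_one_of_one_le₀ hy
    exact mul_le_of_le_one_right (Real.exp_pos M).le h2
  have hb3 : ∀ y : ℝ, R ≤ y →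
      y * F y ≤ (Real.exp M * Real.exp (2*t₀*A₀)) * y ^ (-(1+A₀)) := by
    intro y hy
    have hy1 : 1 ≤ y := le_trans hR1 hy
    have hy0 : (0:ℝ) < y := by linarith
    rw [hFexp y hy1]
    have hlogy : 2*t₀ ≤ Real.log y := by
      have := Real.log_le_log hR0 hy
      rwa [hR_def, Real.log_exp] at this
    have h := K2 (Real.log y) hlogy
    calc Real.exp (2*N*(Real.log y) - 2*(Real.log y)^(1+δ) - Real.log y)
        ≤ Real.exp (M + 2*t₀*A₀ - (1+A₀)*Real.log y) := Real.exp_le_exp.2 (by linarith only [h])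
      _ = (Real.exp M * Real.exp (2*t₀*A₀)) * y ^ (-(1+A₀)) := by
          rw [Real.rpow_def_of_pos hy0, ← Real.exp_add, ← Real.exp_add]
          congr 1
          ring
  -- integrability
  have hi1 : IntegrableOn (fun y => y * F y) (Set.Ioc (0:ℝ) 1) := by
    refine Measure.integrableOn_of_bounded (M := 1) measure_Ioc_lt_top.ne
      hmeasyF.aestronglyMeasurable ?_
    filter_upwards [ae_restrict_mem measurableSet_Ioc] with y hy
    rw [Real.norm_eq_abs, abs_of_nonneg (mul_nonneg hy.1.le (hF0 y hy.1.le))]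
    exact hFle1 y hy.1.le hy.2
  have hi2 : IntegrableOn (fun y => y * F y) (Set.Ioc (1:ℝ) R) := by
    refine Measure.integrableOn_of_bounded (M := Real.exp M) measure_Ioc_lt_top.ne
      hmeasyF.aestronglyMeasurable ?_
    filter_upwards [ae_restrict_mem measurableSet_Ioc] with y hy
    have h0 : (0:ℝ) ≤ y := by linarith [hy.1]
    rw [Real.norm_eq_abs, abs_of_nonneg (mul_nonneg h0 (hF0 y h0))]
    exact hb2' y hy.1.le
  have hi3 : IntegrableOn (fun y => y * F y) (Set.Ioi R) := by
    have hrint : IntegrableOn (fun y : ℝ => y ^ (-(1+A₀))) (Set.Ioi R) :=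
      integrableOn_Ioi_rpow_of_lt (by linarith) hR0
    have hdint : IntegrableOn
        (fun y : ℝ => (Real.exp M * Real.exp (2*t₀*A₀)) * y ^ (-(1+A₀))) (Set.Ioi R) :=
      hrint.const_mul _
    refine Integrable.mono' hdint hmeasyF.aestronglyMeasurable.restrict ?_
    filter_upwards [ae_restrict_mem measurableSet_Ioi] with y hy
    have h1 : (1:ℝ) ≤ y := le_trans hR1 hy.le
    have h0 : (0:ℝ) ≤ y := by linarith
    rw [Real.norm_eq_abs, abs_of_nonneg (mul_nonneg h0 (hF0 y h0))]
    exact hb3 y hy.le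
  have hd12 : Disjoint (Set.Ioc (1:ℝ) R) (Set.Ioi R) := by
    rw [Set.disjoint_left]
    rintro x ⟨_, hx⟩ hx'
    exact absurd hx' (not_lt.2 hx)
  have hd1 : Disjoint (Set.Ioc (0:ℝ) 1) (Set.Ioi 1) := by
    rw [Set.disjoint_left]
    rintro x ⟨_, hx⟩ hx'
    exact absurd hx' (not_lt.2 hx)
  have hu2 : Set.Ioc (1:ℝ) R ∪ Set.Ioi R = Set.Ioi 1 := Set.Ioc_union_Ioi_eq_Ioi hR1
  have hu1 : Set.Ioc (0:ℝ) 1 ∪ Set.Ioi 1 = Set.Ioi 0 := Set.Ioc_union_Ioi_eq_Ioi zero_le_one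
  have hiIoi1 : IntegrableOn (fun y => y * F y) (Set.Ioi (1:ℝ)) := by
    rw [← hu2]; exact hi2.union hi3
  have hiIoi : IntegrableOn (fun y => y * F y) (Set.Ioi (0:ℝ)) := by
    rw [← hu1]; exact hi1.union hiIoi1
  -- splitting J
  have hJsplit1 : J = (∫ y in Set.Ioc (0:ℝ) 1, y * F y) + ∫ y in Set.Ioi (1:ℝ), y * F y := by
    rw [hJ_def, ← hu1, setIntegral_union hd1 measurableSet_Ioi hi1 hiIoi1]
  have hJsplit2 : (∫ y in Set.Ioi (1:ℝ), y * F y)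
      = (∫ y in Set.Ioc (1:ℝ) R, y * F y) + ∫ y in Set.Ioi R, y * F y := by
    rw [← hu2, setIntegral_union hd12 measurableSet_Ioi hi2 hi3]
  have hp1 : (∫ y in Set.Ioc (0:ℝ) 1, y * F y) ≤ 1 := by
    have h : (∫ y in Set.Ioc (0:ℝ) 1, y * F y) ≤ ∫ _y in Set.Ioc (0:ℝ) 1, (1:ℝ) :=
      setIntegral_mono_on hi1 (integrableOn_const measure_Ioc_lt_top.ne)
        measurableSet_Ioc (fun y hy => hFle1 y hy.1.le hy.2)
    calc (∫ y in Set.Ioc (0:ℝ) 1, y * F y) ≤ ∫ _y in Set.Ioc (0:ℝ) 1, (1:ℝ) := h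
      _ = 1 := by simp [Real.volume_Ioc]
  have hinv_int : IntegrableOn (fun y : ℝ => Real.exp M * y⁻¹) (Set.Ioc 1 R) := by
    refine Measure.integrableOn_of_bounded (M := Real.exp M) measure_Ioc_lt_top.ne
      ((measurable_inv.const_mul _).aestronglyMeasurable) ?_
    filter_upwards [ae_restrict_mem measurableSet_Ioc] with y hy
    have h1 : (0:ℝ) < y := lt_of_lt_of_le one_pos hy.1.le
    have h2 : y⁻¹ ≤ 1 := inv_le_one_of_one_le₀ hy.1.le
    rw [Real.norm_eq_abs, abs_of_nonneg (by positivity)]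
    exact mul_le_of_le_one_right (Real.exp_pos M).le h2
  have hp2 : (∫ y in Set.Ioc (1:ℝ) R, y * F y) ≤ Real.exp M * (2*t₀) := by
    have ha : (∫ y in Set.Ioc (1:ℝ) R, y * F y) ≤ ∫ y in Set.Ioc (1:ℝ) R, Real.exp M * y⁻¹ :=
      setIntegral_mono_on hi2 hinv_int measurableSet_Ioc (fun y hy => hb2 y hy.1.le)
    have h0R : (0:ℝ) ∉ Set.uIcc 1 R := by
      rw [Set.uIcc_of_le hR1]
      rintro ⟨h01, -⟩
      norm_num at h01
    have hb : (∫ y in Set.Ioc (1:ℝ) R, Real.exp M * y⁻¹) = Real.exp M * (2*t₀) := by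
      rw [integral_const_mul]
      congr 1
      rw [← intervalIntegral.integral_of_le hR1, integral_inv h0R, div_one, hR_def,
        Real.log_exp]
    linarith only [ha, hb.le]
  have hp3 : (∫ y in Set.Ioi R, y * F y) ≤ Real.exp M / A₀ := by
    have hdint : IntegrableOn
        (fun y : ℝ => (Real.exp M * Real.exp (2*t₀*A₀)) * y ^ (-(1+A₀))) (Set.Ioi R) :=
      (integrableOn_Ioi_rpow_of_lt (by linarith) hR0).const_mul _
    have ha : (∫ y in Set.Ioi R, y * F y)
        ≤ ∫ y in Set.Ioi R, (Real.exp M * Real.exp (2*t₀*A₀)) * y ^ (-(1+A₀)) :=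
      setIntegral_mono_on hi3 hdint measurableSet_Ioi (fun y hy => hb3 y hy.le)
    have hval : (∫ y in Set.Ioi R, (y:ℝ) ^ (-(1+A₀))) = R ^ (-A₀) / A₀ := by
      rw [integral_Ioi_rpow_of_lt (by linarith) hR0, show -(1+A₀)+1 = -A₀ by ring,
        neg_div_neg_eq]
    have hcancel : Real.exp (2*t₀*A₀) * R ^ (-A₀) = 1 := by
      rw [hR_def, ← Real.exp_mul, ← Real.exp_add]
      rw [show 2*t₀*A₀ + 2*t₀*(-A₀) = 0 by ring, Real.exp_zero]
    have hb : (∫ y in Set.Ioi R, (Real.exp M * Real.exp (2*t₀*A₀)) * y ^ (-(1+A₀)))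
        = Real.exp M / A₀ := by
      rw [integral_const_mul, hval]
      calc Real.exp M * Real.exp (2*t₀*A₀) * (R ^ (-A₀) / A₀)
          = Real.exp M * (Real.exp (2*t₀*A₀) * R ^ (-A₀)) / A₀ := by ring
        _ = Real.exp M / A₀ := by rw [hcancel, mul_one]
    linarith only [ha, hb.le]
  have hexpM1 : (1:ℝ) ≤ Real.exp M := Real.one_le_exp hMpos.le
  have hJub : J ≤ Real.exp M * (1 + 2*t₀ + 1/A₀) := by
    rw [hJsplit1, hJsplit2]
    have h3 : Real.exp M / A₀ = Real.exp M * (1/A₀) := by ring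
    linarith only [hp1, hp2, hp3, hexpM1, h3]
  -- lower bound on J
  set R₁ : ℝ := Real.exp t₀ with hR₁_def
  set R₂ : ℝ := Real.exp (t₀ + 1/N) with hR₂_def
  have hR₁R₂ : R₁ ≤ R₂ := Real.exp_le_exp.2 (by
    have : (0:ℝ) < 1/N := by positivity
    linarith)
  have hR₁1 : 1 ≤ R₁ := Real.one_le_exp (by linarith)
  have hR₁0 : (0:ℝ) < R₁ := Real.exp_pos t₀
  have hR₂0 : (0:ℝ) < R₂ := Real.exp_pos _
  have hsub : Set.Ioc R₁ R₂ ⊆ Set.Ioi (0:ℝ) := fun y hy =>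
    lt_trans (lt_of_lt_of_le one_pos hR₁1) hy.1
  have hlow : ∀ y ∈ Set.Ioc R₁ R₂, Real.exp (M - 7 - t₀) ≤ y * F y := by
    intro y hy
    have hy1 : 1 ≤ y := le_trans hR₁1 hy.1.le
    have hy0 : (0:ℝ) < y := lt_of_lt_of_le one_pos hy1
    rw [hFexp y hy1]
    apply Real.exp_le_exp.2
    have hly1 : t₀ ≤ Real.log y := by
      have h := Real.log_le_log hR₁0 hy.1.le
      rwa [hR₁_def, Real.log_exp] at h
    have hly2 : Real.log y ≤ t₀ + 1/N := by
      have h := Real.log_le_log hy0 hy.2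
      rwa [hR₂_def, Real.log_exp] at h
    have hK3 := K3 (Real.log y - t₀) (by linarith) (by linarith)
    rw [show t₀ + (Real.log y - t₀) = Real.log y by ring] at hK3
    have h1N : 1/N ≤ 1 := by rw [div_le_one hN0]; linarith
    linarith only [hK3, hly2, h1N]
  have hvol : (volume (Set.Ioc R₁ R₂)).toReal = R₂ - R₁ := by
    rw [Real.volume_Ioc, ENNReal.toReal_ofReal (by linarith)]
  have hpieceint : IntegrableOn (fun y => y * F y) (Set.Ioc R₁ R₂) :=
    hiIoi.mono_set hsub
  have hJlb1 : Real.exp (M - 7 - t₀) * (R₂ - R₁) ≤ ∫ y in Set.Ioc R₁ R₂, y * F y := by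
    have := setIntegral_ge_of_const_le measurableSet_Ioc measure_Ioc_lt_top.ne hlow hpieceint
    rw [measureReal_def, hvol, smul_eq_mul, mul_comm] at this; exact this
  have hJlb2 : (∫ y in Set.Ioc R₁ R₂, y * F y) ≤ J := by
    rw [hJ_def]
    refine setIntegral_mono_set hiIoi ?_ (HasSubset.Subset.eventuallyLE hsub)
    filter_upwards [ae_restrict_mem measurableSet_Ioi] with y hy
    exact mul_nonneg hy.le (hF0 y hy.le)
  have hgap : Real.exp (M - 7) * (1/N) ≤ Real.exp (M - 7 - t₀) * (R₂ - R₁) := by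
    have h1 : R₂ - R₁ = R₁ * (Real.exp (1/N) - 1) := by
      rw [hR₂_def, hR₁_def, Real.exp_add]; ring
    have h2 : 1/N ≤ Real.exp (1/N) - 1 := by
      have := Real.add_one_le_exp (1/N); linarith
    have h3 : Real.exp (M-7-t₀) * R₁ = Real.exp (M-7) := by
      rw [hR₁_def, ← Real.exp_add]; congr 1; ring
    calc Real.exp (M-7) * (1/N) = (Real.exp (M-7-t₀) * R₁) * (1/N) := by rw [h3]
      _ ≤ (Real.exp (M-7-t₀) * R₁) * (Real.exp (1/N) - 1) :=
          mul_le_mul_of_nonneg_left h2 (by positivity)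
      _ = Real.exp (M-7-t₀) * (R₂ - R₁) := by rw [h1]; ring
  have hJlb : Real.exp (M - 7) / N ≤ J := by
    have h : Real.exp (M-7)/N = Real.exp (M-7) * (1/N) := by ring
    linarith only [hJlb1, hJlb2, hgap, h]
  have hJpos : 0 < J := lt_of_lt_of_le (by positivity) hJlb
  -- conclusion
  have hwn : w n = Real.log (2*π*J) := by rw [hw n, hIeq]
  have hπ0 : (0:ℝ) < π := Real.pi_pos
  have h2π1 : (1:ℝ) ≤ 2*π := by linarith only [Real.pi_gt_three]
  have hn2 : (2:ℝ) ≤ (n:ℝ) := by exact_mod_cast hn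
  have hlogN : Real.log N ≤ 2 * Real.log n := by
    have h1 : N ≤ (n:ℝ)^2 := by rw [hN_def]; nlinarith only [hn2]
    have h2 : Real.log N ≤ Real.log ((n:ℝ)^2) := Real.log_le_log hN0 h1
    rwa [Real.log_pow, Nat.cast_ofNat] at h2
  have hup : w n - M ≤ (2/δ)*Real.log n + Real.log K := by
    have hco : 1 + 2*t₀ + 1/A₀ ≤ t₀*(3 + 1/A₀) := by
      have i1 : 1/A₀ ≤ t₀*(1/A₀) := le_mul_of_one_le_left (by positivity) ht₀1
      linarith only [i1, ht₀1]
    have hB : 2*π*J ≤ Real.exp M * (t₀ * K) := by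
      calc 2*π*J ≤ 2*π*(Real.exp M * (1+2*t₀+1/A₀)) :=
            mul_le_mul_of_nonneg_left hJub (by positivity)
        _ = (2*π*Real.exp M) * (1+2*t₀+1/A₀) := by ring
        _ ≤ (2*π*Real.exp M) * (t₀*(3+1/A₀)) :=
            mul_le_mul_of_nonneg_left hco (by positivity)
        _ = Real.exp M * (t₀*K) := by rw [hK_def]; ring
    have hlog1 : w n ≤ Real.log (Real.exp M * (t₀*K)) := by
      rw [hwn]
      exact Real.log_le_log (by positivity) hB
    rw [Real.log_mul (Real.exp_ne_zero M) (by positivity), Real.log_exp,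
      Real.log_mul (by positivity) (by positivity)] at hlog1
    have hlogt₀ : Real.log t₀ ≤ (1/δ) * Real.log N := by
      rw [ht₀_def, Real.log_rpow (by positivity)]
      have h1 : Real.log (N/(1+δ)) ≤ Real.log N :=
        Real.log_le_log (by positivity) (div_le_self hN0.le (by linarith))
      exact mul_le_mul_of_nonneg_left h1 (by positivity)
    have h3 : (1/δ)*Real.log N ≤ (1/δ)*(2*Real.log n) :=
      mul_le_mul_of_nonneg_left hlogN (by positivity)
    have h4 : (1/δ)*(2*Real.log n) = (2/δ)*Real.log n := by ring
    have h5 : w n - M ≤ Real.log t₀ + Real.log K := by linarith only [hlog1]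
    have h6 : Real.log t₀ ≤ 2/δ*Real.log n := by
      calc Real.log t₀ ≤ 1/δ*Real.log N := hlogt₀
        _ ≤ 1/δ*(2*Real.log n) := h3
        _ = 2/δ*Real.log n := h4
    clear_value N t₀ M K J
    linarith only [h5, h6]
  have hlb : M - w n ≤ 7 + 2*Real.log n := by
    have hB : Real.exp (M-7)/N ≤ 2*π*J := by
      calc Real.exp (M-7)/N ≤ J := hJlb
        _ = 1*J := (one_mul J).symm
        _ ≤ (2*π)*J := mul_le_mul_of_nonneg_right h2π1 hJpos.le
        _ = 2*π*J := by ring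
    have hlog1 : Real.log (Real.exp (M-7)/N) ≤ w n := by
      rw [hwn]
      exact Real.log_le_log (by positivity) hB
    rw [Real.log_div (Real.exp_ne_zero _) hN0.ne', Real.log_exp] at hlog1
    linarith only [hlog1, hlogN]
  have hlogn2 : Real.log 2 ≤ Real.log n := Real.log_le_log two_pos hn2
  have hlogn0 : 0 < Real.log n := lt_of_lt_of_le hlog2 hlogn2
  rw [hMc] at hup hlb
  rw [abs_le]
  have h1 : (Real.log K + 7)/Real.log 2 * Real.log 2
      ≤ (Real.log K + 7)/Real.log 2 * Real.log n :=
    mul_le_mul_of_nonneg_left hlogn2 (by positivity)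
  rw [div_mul_cancel₀ _ hlog2.ne'] at h1
  have h2 : 0 ≤ (2/δ) * Real.log n := by positivity
  constructor
  · linarith only [hlb, h1, h2, hlogn0, hlogK]
  · linarith only [hup, h1, h2, hlogn0, hlogK]
end

section
/- For every A > 0 there exists a constant C ∈ ℝ such that for all integers n > 0 and s ≥ 0 with s ≠ n: ((n-s)/2)·[(n+2)^{1+1/δ} - n^{1+1/δ}] + (s+1)^{1+1/δ} - (n+1)^{1+1/δ} ≥ C + A|n-s| log(n+2) + A log(s+2). -/
open Real

namespace ConvexGapAux

/-- Bernoulli: `(t+1)^q ≥ t^q + q t^(q-1)` for `t ≥ 1`, `q ≥ 1`. -/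
lemma bern {q : ℝ} (hq : 1 ≤ q) {t : ℝ} (ht : 1 ≤ t) :
    t ^ q + q * t ^ (q - 1) ≤ (t + 1) ^ q := by
  have ht0 : (0:ℝ) < t := lt_of_lt_of_le one_pos ht
  have hs : (-1:ℝ) ≤ 1 / t := by
    have h : (0:ℝ) ≤ 1 / t := by positivity
    linarith
  have hB := one_add_mul_self_le_rpow_one_add hs hq
  have h1 : (t + 1) ^ q = t ^ q * (1 + 1/t) ^ q := by
    rw [← Real.mul_rpow ht0.le (by positivity)]
    congr 1
    field_simp
  have h2 : t ^ q * (1 + q * (1/t)) ≤ t ^ q * (1 + 1/t) ^ q :=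
    mul_le_mul_of_nonneg_left hB (Real.rpow_nonneg ht0.le q)
  have h3 : t ^ q * (1 + q * (1/t)) = t ^ q + q * t ^ (q - 1) := by
    rw [Real.rpow_sub ht0, Real.rpow_one]
    field_simp
  rw [h1]
  rw [h3] at h2
  exact h2

/-- Second difference lower bound: for `x ≥ 1`, `p > 2`,
`(x+2)^p - 2(x+1)^p + x^p ≥ p (p-1) x^(p-2)`. -/
lemma secondDiff {p : ℝ} (hp : 2 < p) {x : ℝ} (hx : 1 ≤ x) :
    p * (p - 1) * x ^ (p - 2) ≤ (x + 2) ^ p - 2 * (x + 1) ^ p + x ^ p := by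
  have hx0 : (0:ℝ) < x := lt_of_lt_of_le one_pos hx
  set q : ℝ := p - 1 with hqdef
  have hq1 : 1 ≤ q := by simp [hqdef]; linarith
  have hq0 : 0 ≤ q := by linarith
  have hcont : Continuous fun t : ℝ => t ^ q :=
    continuous_id.rpow_const fun _ => Or.inr hq0
  have hcont1 : Continuous fun t : ℝ => (t + 1) ^ q :=
    (continuous_id.add continuous_const).rpow_const fun _ => Or.inr hq0
  -- integral formulas
  have hI : ∀ a : ℝ, ∫ t in a..(a+1), t ^ q = ((a+1) ^ p - a ^ p) / p := by
    intro a
    rw [integral_rpow (Or.inl (by linarith : (-1:ℝ) < q))]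
    norm_num [hqdef]
  have hshift : (∫ t in x..(x+1), (t + 1) ^ q) = ∫ t in (x+1)..(x+2), t ^ q := by
    have := intervalIntegral.integral_comp_add_right (a := x) (b := x + 1)
      (f := fun t : ℝ => t ^ q) 1
    rw [this]
    norm_num
    ring_nf
  have hint1 : IntervalIntegrable (fun t : ℝ => t ^ q) MeasureTheory.volume x (x+1) :=
    hcont.intervalIntegrable _ _
  have hint2 : IntervalIntegrable (fun t : ℝ => (t+1) ^ q) MeasureTheory.volume x (x+1) :=
    hcont1.intervalIntegrable _ _
  have hmono : q * x ^ (q - 1) ≤ ∫ t in x..(x+1), ((t + 1) ^ q - t ^ q) := by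
    have hconst : (∫ _ in x..(x+1), q * x ^ (q-1)) = q * x ^ (q - 1) := by
      simp
    rw [← hconst]
    apply intervalIntegral.integral_mono_on (by linarith)
      (intervalIntegrable_const) (hint2.sub hint1)
    intro t ht
    obtain ⟨ht1, _⟩ := ht
    have htx : 1 ≤ t := le_trans hx ht1
    have h1 := bern hq1 htx
    have h2 : x ^ (q - 1) ≤ t ^ (q - 1) :=
      Real.rpow_le_rpow hx0.le ht1 (by linarith)
    nlinarith [mul_le_mul_of_nonneg_left h2 hq0]
  have hsub : (∫ t in x..(x+1), ((t + 1) ^ q - t ^ q))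
      = (∫ t in x..(x+1), (t + 1) ^ q) - ∫ t in x..(x+1), t ^ q :=
    intervalIntegral.integral_sub hint2 hint1
  have e1 : (∫ t in x..(x+1), t ^ q) = ((x+1) ^ p - x ^ p) / p := hI x
  have e2 : (∫ t in (x+1)..(x+2), t ^ q) = ((x+2) ^ p - (x+1) ^ p) / p := by
    have := hI (x+1)
    rw [show x + 1 + 1 = x + 2 by ring] at this
    exact this
  have hp0 : (0:ℝ) < p := by linarith
  have key : q * x ^ (q - 1) ≤ ((x+2) ^ p - (x+1) ^ p) / p - ((x+1) ^ p - x ^ p) / p := by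
    calc q * x ^ (q - 1) ≤ ∫ t in x..(x+1), ((t + 1) ^ q - t ^ q) := hmono
    _ = ((x+2) ^ p - (x+1) ^ p) / p - ((x+1) ^ p - x ^ p) / p := by
        rw [hsub, hshift, e1, e2]
  have hq2 : q - 1 = p - 2 := by simp [hqdef]; ring
  rw [hq2] at key
  have := mul_le_mul_of_nonneg_left key hp0.le
  calc p * (p - 1) * x ^ (p - 2) = p * (q * x ^ (p-2)) := by rw [hqdef]; ring
  _ ≤ p * (((x+2) ^ p - (x+1) ^ p) / p - ((x+1) ^ p - x ^ p) / p) := this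
  _ = (x + 2) ^ p - 2 * (x + 1) ^ p + x ^ p := by field_simp; ring

lemma one_le_term {p : ℝ} (hp : 2 < p) {x : ℝ} (hx : 1 ≤ x) :
    p * (p - 1) ≤ p * (p - 1) * x ^ (p - 2) := by
  have h1 : (1:ℝ) ≤ x ^ (p - 2) := Real.one_le_rpow hx (by linarith)
  have h2 : (0:ℝ) ≤ p * (p - 1) := by nlinarith
  nlinarith [mul_le_mul_of_nonneg_left h1 h2]

/-- Telescoped: difference of consecutive differences over `k` steps. -/
lemma tele {p : ℝ} (hp : 2 < p) {x : ℝ} (hx : 1 ≤ x) (k : ℕ) :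
    p * (p - 1) * k ≤ ((x + k + 1) ^ p - (x + k) ^ p) - ((x + 1) ^ p - x ^ p) := by
  induction k with
  | zero => simp
  | succ k ih =>
    have hx' : 1 ≤ x + k := by
      have : (0:ℝ) ≤ k := Nat.cast_nonneg k
      linarith
    have h1 := secondDiff hp hx'
    have h2 := one_le_term hp hx'
    push_cast
    rw [show x + (k + 1 : ℝ) + 1 = x + k + 2 by ring,
      show x + ((k : ℝ) + 1) = x + k + 1 by ring]
    push_cast at ih
    nlinarith

/-- Lower bound in the case `s < n`: with `m = n - s ≥ 1`, `x = n ≥ m`. -/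
lemma low {p : ℝ} (hp : 2 < p) :
    ∀ m : ℕ, 1 ≤ m → ∀ x : ℝ, (m : ℝ) ≤ x →
    p * (p-1) * ((m : ℝ) * ((m : ℝ) - 1) / 2) + p * (p-1) / 2 * x ^ (p - 2) * m
      ≤ (m : ℝ) / 2 * ((x + 2) ^ p - x ^ p) + (x - m + 1) ^ p - (x + 1) ^ p := by
  intro m hm
  induction m, hm using Nat.le_induction with
  | base =>
    intro x hx
    push_cast at hx ⊢
    have h := secondDiff hp hx
    rw [show x - 1 + 1 = x by ring]
    nlinarith
  | succ m hm ih =>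
    intro x hx
    push_cast at hx
    have hxm : (m : ℝ) ≤ x := by linarith
    have hx1 : (1:ℝ) ≤ x := by
      have : (1:ℝ) ≤ (m:ℝ) := by exact_mod_cast hm
      linarith
    have hy1 : (1:ℝ) ≤ x - m := by linarith
    have ht := tele hp hy1 m
    rw [show x - (m:ℝ) + (m:ℝ) + 1 = x + 1 by ring,
      show x - (m:ℝ) + (m:ℝ) = x by ring,
      show x - (m:ℝ) + 1 = x - m + 1 by ring] at ht
    have hsd := secondDiff hp hx1
    have hih := ih x hxm
    push_cast
    rw [show x - ((m:ℝ) + 1) + 1 = x - m by ring]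
    nlinarith

/-- Lower bound in the case `s > n`: with `m = s - n ≥ 1`, `x = n ≥ 1`. -/
lemma high {p : ℝ} (hp : 2 < p) :
    ∀ m : ℕ, 1 ≤ m → ∀ x : ℝ, (1 : ℝ) ≤ x →
    p * (p-1) * ((m : ℝ) * ((m : ℝ) - 1) / 2) + p * (p-1) / 2 * x ^ (p - 2) * m
      ≤ -((m : ℝ) / 2) * ((x + 2) ^ p - x ^ p) + (x + m + 1) ^ p - (x + 1) ^ p := by
  intro m hm
  induction m, hm using Nat.le_induction with
  | base =>
    intro x hx
    push_cast
    have h := secondDiff hp hx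
    rw [show x + 1 + 1 = x + 2 by ring]
    nlinarith
  | succ m hm ih =>
    intro x hx
    have ht := tele hp (by linarith : (1:ℝ) ≤ x + 1) m
    rw [show x + 1 + (m:ℝ) + 1 = x + m + 2 by ring,
      show x + 1 + (m:ℝ) = x + m + 1 by ring,
      show x + 1 + 1 = x + 2 by ring] at ht
    have hsd := secondDiff hp hx
    have hih := ih x hx
    push_cast
    rw [show x + ((m:ℝ) + 1) + 1 = x + m + 2 by ring]
    nlinarith

/-- Power beats log: for `a > 0`, `b > 0`, `α > 0` there is `C₅ ≥ 0` with
`a log(y+2) ≤ b y^α + C₅` for all `y ≥ 1`. -/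
lemma logbound {a b α : ℝ} (ha : 0 < a) (hb : 0 < b) (hα : 0 < α) :
    ∃ C₅ : ℝ, 0 ≤ C₅ ∧ ∀ y : ℝ, 1 ≤ y → a * Real.log (y + 2) ≤ b * y ^ α + C₅ := by
  refine ⟨a * Real.log 3 + (2 * a / α) ^ 2 / (4 * b), by positivity, fun y hy => ?_⟩
  have hy0 : (0:ℝ) < y := lt_of_lt_of_le one_pos hy
  set u : ℝ := y ^ (α / 2) with hu
  have hu0 : (0:ℝ) < u := Real.rpow_pos_of_pos hy0 _
  have hlog1 : Real.log (y + 2) ≤ Real.log 3 + Real.log y := by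
    rw [← Real.log_mul (by norm_num) (ne_of_gt hy0)]
    exact Real.log_le_log (by linarith) (by linarith)
  have hlogu : Real.log u = (α / 2) * Real.log y := Real.log_rpow hy0 _
  have hlogy : Real.log y ≤ (2 / α) * u := by
    have h1 : Real.log u ≤ u - 1 := Real.log_le_sub_one_of_pos hu0
    rw [hlogu] at h1
    have h2 : Real.log y = (2 / α) * ((α / 2) * Real.log y) := by
      field_simp
    rw [h2]
    have : (2 / α) * ((α / 2) * Real.log y) ≤ (2 / α) * (u - 1) := by
      apply mul_le_mul_of_nonneg_left h1 (by positivity)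
    linarith [this, mul_le_mul_of_nonneg_left (show u - 1 ≤ u by linarith)
      (show (0:ℝ) ≤ 2 / α by positivity)]
  have huu : u * u = y ^ α := by
    rw [hu, ← Real.rpow_add hy0]
    norm_num
  have hAM : (2 * a / α) * u ≤ b * (u * u) + (2 * a / α) ^ 2 / (4 * b) := by
    have he : b * (u * u) + (2 * a / α) ^ 2 / (4 * b) - (2 * a / α) * u
        = (2 * b * u - 2 * a / α) ^ 2 / (4 * b) := by
      field_simp
      ring
    nlinarith [div_nonneg (sq_nonneg (2 * b * u - 2 * a / α)) (by positivity : (0:ℝ) ≤ 4 * b)]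
  have h4 : a * Real.log y ≤ (2 * a / α) * u := by
    have := mul_le_mul_of_nonneg_left hlogy ha.le
    calc a * Real.log y ≤ a * ((2/α) * u) := this
    _ = (2 * a / α) * u := by ring
  have h5 : a * Real.log (y + 2) ≤ a * Real.log 3 + a * Real.log y := by
    nlinarith [mul_le_mul_of_nonneg_left hlog1 ha.le]
  rw [← huu]
  linarith

/-- Final arithmetic step. -/
lemma final {c₂ A C₅ L Ls X m : ℝ} (hc : 0 < c₂) (hA : 0 < A) (hm : 1 ≤ m)
    (hL : 0 ≤ L) (hX : 0 ≤ X) (hC₅ : 0 ≤ C₅)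
    (hs : Ls ≤ L + m + 1) (h2 : 2 * A * L ≤ c₂ / 2 * X + C₅) :
    -(c₂ / 2 + C₅ + 2 * A) ^ 2 / (2 * c₂) + A * m * L + A * Ls
      ≤ c₂ * (m * (m - 1) / 2) + c₂ / 2 * X * m := by
  have hm0 : (0:ℝ) ≤ m := by linarith
  have h2m : 2 * A * L * m ≤ (c₂ / 2 * X + C₅) * m :=
    mul_le_mul_of_nonneg_right h2 hm0
  have hALm : A * L ≤ A * L * m := by
    nlinarith [mul_nonneg (mul_nonneg hA.le hL) (sub_nonneg.mpr hm)]
  have hsA : A * Ls ≤ A * L + A * m + A := by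
    nlinarith [mul_le_mul_of_nonneg_left hs hA.le]
  have hAm : A ≤ A * m := by nlinarith
  have hkey : 0 ≤ c₂ * (m * m) / 2 - (c₂ / 2 + C₅ + 2 * A) * m
      + (c₂ / 2 + C₅ + 2 * A) ^ 2 / (2 * c₂) := by
    have he : c₂ * (m * m) / 2 - (c₂ / 2 + C₅ + 2 * A) * m
        + (c₂ / 2 + C₅ + 2 * A) ^ 2 / (2 * c₂)
        = (c₂ * m - (c₂ / 2 + C₅ + 2 * A)) ^ 2 / (2 * c₂) := by
      field_simp
      ring
    rw [he]
    positivity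
  have hC₅m : C₅ ≤ C₅ * m := by nlinarith
  have hstep1 : A * m * L + A * Ls ≤ c₂ / 2 * X * m + C₅ * m + 2 * A * m := by
    nlinarith [h2m, hALm, hsA, hAm]
  have e : -(c₂ / 2 + C₅ + 2 * A) ^ 2 / (2 * c₂)
      = -((c₂ / 2 + C₅ + 2 * A) ^ 2 / (2 * c₂)) := by ring
  rw [e]
  linarith [hkey, hstep1]

end ConvexGapAux

/-- For every `A > 0` there is a constant `C` such that for all integers `n > 0`, `s ≥ 0`
with `s ≠ n`:
`((n-s)/2)((n+2)^{1+1/δ} - n^{1+1/δ}) + (s+1)^{1+1/δ} - (n+1)^{1+1/δ}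
  ≥ C + A|n-s| log(n+2) + A log(s+2)`. -/
theorem convexity_gap_inequality (δ : ℝ) (hδ0 : 0 < δ) (hδ1 : δ < 1)
    (A : ℝ) (hA : 0 < A) :
    ∃ C : ℝ, ∀ n s : ℕ, 0 < n → s ≠ n →
      ((n : ℝ) - s) / 2 * (((n : ℝ) + 2) ^ (1 + 1 / δ) - (n : ℝ) ^ (1 + 1 / δ))
        + ((s : ℝ) + 1) ^ (1 + 1 / δ) - ((n : ℝ) + 1) ^ (1 + 1 / δ)
      ≥ C + A * |(n : ℝ) - s| * Real.log ((n : ℝ) + 2) + A * Real.log ((s : ℝ) + 2) := by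
  set p : ℝ := 1 + 1 / δ with hpdef
  have hp : 2 < p := by
    have : 1 < 1 / δ := by
      rw [lt_div_iff₀ hδ0]
      linarith
    simp only [hpdef]; linarith
  set c₂ : ℝ := p * (p - 1) with hc₂
  have hc₂0 : 0 < c₂ := by nlinarith
  obtain ⟨C₅, hC₅0, hC₅⟩ := ConvexGapAux.logbound (a := 2 * A) (b := c₂ / 2)
    (α := p - 2) (by linarith) (by positivity) (by linarith)
  refine ⟨-(c₂ / 2 + C₅ + 2 * A) ^ 2 / (2 * c₂), fun n s hn hsn => ?_⟩
  have hn1 : (1:ℝ) ≤ (n:ℝ) := by exact_mod_cast hn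
  have hL : 0 ≤ Real.log ((n:ℝ) + 2) := Real.log_nonneg (by linarith)
  have hX : 0 ≤ (n:ℝ) ^ (p - 2) := Real.rpow_nonneg (by linarith) _
  have h2 : 2 * A * Real.log ((n:ℝ) + 2) ≤ c₂ / 2 * (n:ℝ) ^ (p - 2) + C₅ :=
    hC₅ _ hn1
  rcases lt_or_gt_of_ne hsn with hlt | hgt
  · -- s < n
    set m : ℕ := n - s with hmdef
    have hm1 : 1 ≤ m := by omega
    have hmr : (m : ℝ) = (n : ℝ) - s := by
      rw [hmdef]; push_cast [Nat.cast_sub hlt.le]; ring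
    have hm1r : (1:ℝ) ≤ (m:ℝ) := by exact_mod_cast hm1
    have habs : |(n : ℝ) - s| = m := by
      rw [abs_of_nonneg (by linarith), hmr]
    have hmx : (m : ℝ) ≤ (n : ℝ) := by
      rw [hmr]; have : (0:ℝ) ≤ s := Nat.cast_nonneg s; linarith
    have hlow := ConvexGapAux.low hp m hm1 (n : ℝ) hmx
    rw [show (n:ℝ) - (m:ℝ) + 1 = (s:ℝ) + 1 by rw [hmr]; ring] at hlow
    have hs : Real.log ((s:ℝ) + 2) ≤ Real.log ((n:ℝ) + 2) + m + 1 := by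
      have h1 : Real.log ((s:ℝ) + 2) ≤ Real.log ((n:ℝ) + 2) := by
        apply Real.log_le_log (by positivity)
        have : (s:ℝ) ≤ n := by linarith [hmr, hm1r]
        linarith
      linarith
    have hfin := ConvexGapAux.final hc₂0 hA hm1r hL hX hC₅0 hs h2
    rw [habs, ge_iff_le, ← hmr]
    calc -(c₂ / 2 + C₅ + 2 * A) ^ 2 / (2 * c₂) + A * (m:ℝ) * Real.log ((n:ℝ) + 2)
          + A * Real.log ((s:ℝ) + 2)
        ≤ c₂ * ((m:ℝ) * ((m:ℝ) - 1) / 2) + c₂ / 2 * (n:ℝ) ^ (p - 2) * m := hfin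
      _ ≤ (m:ℝ) / 2 * (((n:ℝ) + 2) ^ p - (n:ℝ) ^ p) + ((s:ℝ) + 1) ^ p - ((n:ℝ) + 1) ^ p := hlow
  · -- n < s
    set m : ℕ := s - n with hmdef
    have hm1 : 1 ≤ m := by omega
    have hmr : (m : ℝ) = (s : ℝ) - n := by
      rw [hmdef]; push_cast [Nat.cast_sub hgt.le]; ring
    have hm1r : (1:ℝ) ≤ (m:ℝ) := by exact_mod_cast hm1
    have habs : |(n : ℝ) - s| = m := by
      rw [abs_of_nonpos (by linarith), hmr]; ring
    have hhigh := ConvexGapAux.high hp m hm1 (n : ℝ) hn1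
    rw [show (n:ℝ) + (m:ℝ) + 1 = (s:ℝ) + 1 by rw [hmr]; ring] at hhigh
    have hs : Real.log ((s:ℝ) + 2) ≤ Real.log ((n:ℝ) + 2) + m + 1 := by
      have hsum : (s:ℝ) + 2 ≤ ((n:ℝ) + 2) * ((m:ℝ) + 2) := by
        have h0 : (0:ℝ) ≤ (n:ℝ) := Nat.cast_nonneg n
        nlinarith [hmr, hm1r]
      have h1 : Real.log ((s:ℝ) + 2) ≤ Real.log (((n:ℝ) + 2) * ((m:ℝ) + 2)) :=
        Real.log_le_log (by positivity) hsum
      have h2' : Real.log (((n:ℝ) + 2) * ((m:ℝ) + 2))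
          = Real.log ((n:ℝ) + 2) + Real.log ((m:ℝ) + 2) :=
        Real.log_mul (by positivity) (by positivity)
      have h3 : Real.log ((m:ℝ) + 2) ≤ (m:ℝ) + 1 := by
        have := Real.log_le_sub_one_of_pos (show (0:ℝ) < (m:ℝ) + 2 by positivity)
        linarith
      linarith
    have hfin := ConvexGapAux.final hc₂0 hA hm1r hL hX hC₅0 hs h2
    rw [habs, ge_iff_le,
      show ((n:ℝ) - s) / 2 = -((m:ℝ) / 2) by rw [hmr]; ring]
    calc -(c₂ / 2 + C₅ + 2 * A) ^ 2 / (2 * c₂) + A * (m:ℝ) * Real.log ((n:ℝ) + 2)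
          + A * Real.log ((s:ℝ) + 2)
        ≤ c₂ * ((m:ℝ) * ((m:ℝ) - 1) / 2) + c₂ / 2 * (n:ℝ) ^ (p - 2) * m := hfin
      _ ≤ -((m:ℝ) / 2) * (((n:ℝ) + 2) ^ p - (n:ℝ) ^ p) + ((s:ℝ) + 1) ^ p - ((n:ℝ) + 1) ^ p := hhigh
end

section
/- In a Hilbert space H, if (e_n)_{n≥0} is an orthonormal basis and (v_n)_{n≥0} are unit vectors with Σ_n ‖e_n - v_n‖² < ∞, and (v_n) is complete in H, then (v_n) is a Riesz basis of H (i.e. the image of an orthonormal basis under a bounded invertible operator). -/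
open Filter Topology

-- Cauchy–Schwarz for tsum
lemma bari_cs_tsum {f g : ℕ → ℝ} (hf0 : ∀ n, 0 ≤ f n) (hg0 : ∀ n, 0 ≤ g n)
    (hf : Summable fun n => f n ^ 2) (hg : Summable fun n => g n ^ 2) :
    Summable (fun n => f n * g n) ∧
      ∑' n, f n * g n ≤ Real.sqrt (∑' n, f n ^ 2) * Real.sqrt (∑' n, g n ^ 2) := by
  have hA : (0:ℝ) ≤ ∑' n, f n ^ 2 := tsum_nonneg fun n => sq_nonneg _
  have hB : (0:ℝ) ≤ ∑' n, g n ^ 2 := tsum_nonneg fun n => sq_nonneg _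
  have key : ∀ s : Finset ℕ,
      ∑ n ∈ s, f n * g n ≤ Real.sqrt (∑' n, f n ^ 2) * Real.sqrt (∑' n, g n ^ 2) := by
    intro s
    have h1 : (∑ n ∈ s, f n * g n) ^ 2 ≤ (∑ n ∈ s, f n ^ 2) * ∑ n ∈ s, g n ^ 2 :=
      Finset.sum_mul_sq_le_sq_mul_sq s f g
    have h2 : (∑ n ∈ s, f n ^ 2) ≤ ∑' n, f n ^ 2 :=
      Summable.sum_le_tsum s (fun i _ => sq_nonneg _) hf
    have h3 : (∑ n ∈ s, g n ^ 2) ≤ ∑' n, g n ^ 2 :=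
      Summable.sum_le_tsum s (fun i _ => sq_nonneg _) hg
    have h0 : (0:ℝ) ≤ ∑ n ∈ s, f n * g n :=
      Finset.sum_nonneg fun i _ => mul_nonneg (hf0 i) (hg0 i)
    have h4 : (∑ n ∈ s, f n * g n) ^ 2 ≤ (∑' n, f n ^ 2) * ∑' n, g n ^ 2 :=
      h1.trans (mul_le_mul h2 h3 (Finset.sum_nonneg fun i _ => sq_nonneg _) hA)
    calc ∑ n ∈ s, f n * g n = Real.sqrt ((∑ n ∈ s, f n * g n) ^ 2) := (Real.sqrt_sq h0).symm
      _ ≤ Real.sqrt ((∑' n, f n ^ 2) * ∑' n, g n ^ 2) := Real.sqrt_le_sqrt h4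
      _ = Real.sqrt (∑' n, f n ^ 2) * Real.sqrt (∑' n, g n ^ 2) := Real.sqrt_mul hA _
  have hsum : Summable (fun n => f n * g n) :=
    summable_of_sum_le (fun n => mul_nonneg (hf0 n) (hg0 n)) key
  exact ⟨hsum, Summable.tsum_le_of_sum_le hsum key⟩

-- closedness of Vᗮ ⊔ W for finite dimensional V, W
lemma bari_isClosed_orth_sup_fd {H : Type*} [NormedAddCommGroup H] [InnerProductSpace ℂ H]
    [CompleteSpace H] (V W : Submodule ℂ H) [FiniteDimensional ℂ V] [FiniteDimensional ℂ W] :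
    IsClosed ((Vᗮ ⊔ W : Submodule ℂ H) : Set H) := by
  haveI : CompleteSpace V := FiniteDimensional.complete ℂ V
  set P : H →L[ℂ] H := V.subtypeL.comp (V.orthogonalProjectionOnto) with hP
  have hPorth : ∀ x ∈ Vᗮ, P x = 0 := by
    intro x hx
    simp [hP, Submodule.orthogonalProjectionOnto_apply_of_mem_orthogonal hx]
  have hPsub : ∀ x : H, x - P x ∈ Vᗮ := fun x => Submodule.sub_starProjection_mem_orthogonal (K := V) x
  have hset : ((Vᗮ ⊔ W : Submodule ℂ H) : Set H) = P ⁻¹' (W.map (P : H →ₗ[ℂ] H) : Set H) := by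
    ext x
    simp only [Set.mem_preimage, SetLike.mem_coe]
    constructor
    · intro hx
      rcases Submodule.mem_sup.1 hx with ⟨m, hm, w, hw, rfl⟩
      have : P (m + w) = P w := by rw [map_add, hPorth m hm, zero_add]
      rw [this]
      exact Submodule.mem_map_of_mem hw
    · rintro ⟨w, hw, hPw⟩
      have h1 : x - P x ∈ Vᗮ := hPsub x
      have h2 : P x ∈ Vᗮ ⊔ W := by
        rw [← hPw, ContinuousLinearMap.coe_coe]
        have : P w = w - (w - P w) := by abel
        rw [this]
        exact Submodule.sub_mem _ (Submodule.mem_sup_right hw)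
          (Submodule.mem_sup_left (hPsub w))
      have h3 := Submodule.add_mem _ (Submodule.mem_sup_left h1) h2
      simpa using h3
  rw [hset]
  haveI : FiniteDimensional ℂ (W.map (P : H →ₗ[ℂ] H)) := Module.Finite.map W (P : H →ₗ[ℂ] H)
  exact (Submodule.closed_of_finiteDimensional (W.map (P : H →ₗ[ℂ] H))).preimage P.continuous

set_option maxHeartbeats 1000000 in
/-- Bari's theorem on quadratically close systems: if `(e_n)` is an orthonormal basis of a
Hilbert space `H`, `(v_n)` are unit vectors with `Σ ‖e_n - v_n‖² < ∞`, and `(v_n)` is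
complete, then `(v_n)` is a Riesz basis, i.e. the image of an orthonormal basis under a
bounded invertible operator. -/
theorem bari_quadratically_close
    {H : Type*} [NormedAddCommGroup H] [InnerProductSpace ℂ H] [CompleteSpace H]
    (b : HilbertBasis ℕ ℂ H) (v : ℕ → H)
    (hnorm : ∀ n, ‖v n‖ = 1)
    (hclose : Summable (fun n => ‖b n - v n‖ ^ 2))
    (hcomplete : (Submodule.span ℂ (Set.range v)).topologicalClosure = ⊤) :
    ∃ T : H ≃L[ℂ] H, ∀ n, T (b n) = v n := by
  classical
  set d : ℕ → H := fun n => v n - b n with hd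
  have hdnorm : ∀ n, ‖d n‖ = ‖b n - v n‖ := fun n => norm_sub_rev _ _
  -- choose N with small tail
  have htend : Tendsto (fun N => ∑' n, ‖b (n + N) - v (n + N)‖ ^ 2) atTop (𝓝 0) := by
    have h1 := hclose.hasSum.tendsto_sum_nat
    have h2 : ∀ N : ℕ, ∑' n, ‖b (n + N) - v (n + N)‖ ^ 2
        = (∑' n, ‖b n - v n‖ ^ 2) - ∑ i ∈ Finset.range N, ‖b i - v i‖ ^ 2 := by
      intro N
      have := Summable.sum_add_tsum_nat_add (f := fun n => ‖b n - v n‖ ^ 2) N hclose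
      linarith
    simp only [h2]
    have h3 := h1.const_sub (∑' n, ‖b n - v n‖ ^ 2)
    simpa using h3
  obtain ⟨N, hN⟩ : ∃ N : ℕ, ∑' n, ‖b (n + N) - v (n + N)‖ ^ 2 < 1 :=
    ((htend.eventually (eventually_lt_nhds one_pos)).exists)
  set d' : ℕ → H := fun n => if N ≤ n then d n else 0 with hd'
  have hd'sq : ∀ n, ‖d' n‖ ^ 2 ≤ ‖b n - v n‖ ^ 2 := by
    intro n
    by_cases h : N ≤ n
    · simp [hd', h, hdnorm n]
    · have h0 : d' n = 0 := by simp [hd', h]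
      rw [h0]
      simp
  have hd'sum : Summable fun n => ‖d' n‖ ^ 2 :=
    Summable.of_nonneg_of_le (fun n => sq_nonneg _) hd'sq hclose
  set c : ℝ := ∑' n, ‖d' n‖ ^ 2 with hc
  have hc0 : (0:ℝ) ≤ c := tsum_nonneg fun n => sq_nonneg _
  have hc1 : c < 1 := by
    have hsplit := Summable.sum_add_tsum_nat_add (f := fun n => ‖d' n‖ ^ 2) N hd'sum
    have h0 : ∑ i ∈ Finset.range N, ‖d' i‖ ^ 2 = 0 := by
      refine Finset.sum_eq_zero fun i hi => ?_
      have : ¬ N ≤ i := Nat.not_le.2 (Finset.mem_range.1 hi)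
      simp [hd', this]
    have heq : ∀ n : ℕ, ‖d' (n + N)‖ ^ 2 = ‖b (n + N) - v (n + N)‖ ^ 2 := by
      intro n
      simp [hd', Nat.le_add_left, hdnorm]
    rw [hc, ← hsplit, h0, zero_add]
    calc ∑' n, ‖d' (n + N)‖ ^ 2 = ∑' n, ‖b (n + N) - v (n + N)‖ ^ 2 := tsum_congr heq
      _ < 1 := hN
  -- Bessel and Cauchy–Schwarz estimates
  have key : ∀ x : H, Summable (fun n => ‖(inner ℂ (b n) x : ℂ) • d' n‖) ∧
      ∑' n, ‖(inner ℂ (b n) x : ℂ) • d' n‖ ≤ Real.sqrt c * ‖x‖ := by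
    intro x
    have hb2 : Summable fun n => ‖(inner ℂ (b n) x : ℂ)‖ ^ 2 :=
      b.orthonormal.inner_products_summable (x := x)
    obtain ⟨hs, hle⟩ := bari_cs_tsum (f := fun n => ‖(inner ℂ (b n) x : ℂ)‖)
      (g := fun n => ‖d' n‖) (fun n => norm_nonneg _) (fun n => norm_nonneg _) hb2 hd'sum
    have hnorm_eq : (fun n => ‖(inner ℂ (b n) x : ℂ) • d' n‖)
        = fun n => ‖(inner ℂ (b n) x : ℂ)‖ * ‖d' n‖ := by
      funext n; exact norm_smul _ _
    refine ⟨by rw [hnorm_eq]; exact hs, ?_⟩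
    have h1 : Real.sqrt (∑' n, ‖(inner ℂ (b n) x : ℂ)‖ ^ 2) ≤ ‖x‖ := by
      have hb3 := b.orthonormal.tsum_inner_products_le (x := x)
      calc Real.sqrt (∑' n, ‖(inner ℂ (b n) x : ℂ)‖ ^ 2) ≤ Real.sqrt (‖x‖ ^ 2) :=
            Real.sqrt_le_sqrt hb3
        _ = ‖x‖ := Real.sqrt_sq (norm_nonneg x)
    calc ∑' n, ‖(inner ℂ (b n) x : ℂ) • d' n‖
        = ∑' n, ‖(inner ℂ (b n) x : ℂ)‖ * ‖d' n‖ := by rw [hnorm_eq]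
      _ ≤ Real.sqrt (∑' n, ‖(inner ℂ (b n) x : ℂ)‖ ^ 2) * Real.sqrt c := hle
      _ ≤ ‖x‖ * Real.sqrt c := by
          exact mul_le_mul_of_nonneg_right h1 (Real.sqrt_nonneg _)
      _ = Real.sqrt c * ‖x‖ := mul_comm _ _
  have hsummable : ∀ x : H, Summable (fun n => (inner ℂ (b n) x : ℂ) • d' n) :=
    fun x => (key x).1.of_norm
  -- the operator K
  set Klin : H →ₗ[ℂ] H :=
    { toFun := fun x => ∑' n, (inner ℂ (b n) x : ℂ) • d' n
      map_add' := by
        intro x y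
        have hpt : ∀ n : ℕ, (inner ℂ (b n) (x + y) : ℂ) • d' n
            = (inner ℂ (b n) x : ℂ) • d' n + (inner ℂ (b n) y : ℂ) • d' n := by
          intro n; rw [inner_add_right, add_smul]
        rw [tsum_congr hpt, Summable.tsum_add (hsummable x) (hsummable y)]
      map_smul' := by
        intro a x
        have hpt : ∀ n : ℕ, (inner ℂ (b n) (a • x) : ℂ) • d' n
            = a • ((inner ℂ (b n) x : ℂ) • d' n) := by
          intro n; rw [inner_smul_right, mul_smul]
        rw [tsum_congr hpt, Summable.tsum_const_smul a (hsummable x)]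
        rfl } with hKlin
  have hKbound : ∀ x, ‖Klin x‖ ≤ Real.sqrt c * ‖x‖ := by
    intro x
    exact (norm_tsum_le_tsum_norm (key x).1).trans (key x).2
  set K : H →L[ℂ] H := Klin.mkContinuous (Real.sqrt c) hKbound with hK
  have hKapply : ∀ x, K x = ∑' n, (inner ℂ (b n) x : ℂ) • d' n := fun x => rfl
  have hKnorm : ‖K‖ < 1 :=
    lt_of_le_of_lt (Klin.mkContinuous_norm_le (Real.sqrt_nonneg c) hKbound)
      ((Real.sqrt_lt' one_pos).2 (by simpa using hc1))
  -- the unit 1 + K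
  set u : (H →L[ℂ] H)ˣ := Units.oneSub (-K) (by rwa [norm_neg]) with hu
  have huval : (u : H →L[ℂ] H) = 1 + K := by
    rw [hu, Units.val_oneSub, sub_neg_eq_add]
  -- the finite rank part
  set F : H →L[ℂ] H := ∑ n ∈ Finset.range N, (innerSL ℂ (b n)).smulRight (d n) with hF
  have hFapply : ∀ x, F x = ∑ n ∈ Finset.range N, (inner ℂ (b n) x : ℂ) • d n := by
    intro x
    rw [hF]
    simp [ContinuousLinearMap.sum_apply, ContinuousLinearMap.smulRight_apply]
  set G : H →L[ℂ] H := (↑u⁻¹ : H →L[ℂ] H).comp F with hG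
  set S : H →L[ℂ] H := 1 + G with hS
  have hSapply : ∀ x, S x = x + G x := by
    intro x; rw [hS]; simp
  have hcompose : ∀ x, (u : H →L[ℂ] H) (S x) = x + K x + F x := by
    intro x
    have h1 : (u : H →L[ℂ] H) (S x) = ((u : H →L[ℂ] H) * S) x := rfl
    have h2 : ((u : H →L[ℂ] H) * S) = (u : H →L[ℂ] H) + F := by
      rw [hS, mul_add, mul_one, hG]
      congr 1
      rw [← ContinuousLinearMap.mul_def, ← mul_assoc, u.mul_inv, one_mul]
    rw [h1, h2, huval]
    simp [ContinuousLinearMap.add_apply]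
  -- values on basis vectors
  have hinner : ∀ m n : ℕ, (inner ℂ (b n) (b m) : ℂ) = if n = m then 1 else 0 :=
    fun m n => orthonormal_iff_ite.mp b.orthonormal n m
  have hKb : ∀ m, K (b m) = d' m := by
    intro m
    rw [hKapply]
    rw [tsum_eq_single m]
    · rw [hinner m m]; simp
    · intro n hnm; rw [hinner m n]; simp [hnm]
  have hFb : ∀ m, F (b m) = if m ∈ Finset.range N then d m else 0 := by
    intro m
    rw [hFapply]
    have hpt : ∀ n ∈ Finset.range N, (inner ℂ (b n) (b m) : ℂ) • d n
        = if n = m then d n else 0 := by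
      intro n _
      rw [hinner m n]
      by_cases h : n = m <;> simp [h]
    rw [Finset.sum_congr rfl hpt, Finset.sum_ite_eq' (Finset.range N) m (fun n => d n)]
  have hTb : ∀ m, (u : H →L[ℂ] H) (S (b m)) = v m := by
    intro m
    rw [hcompose, hKb, hFb]
    by_cases hm : m < N
    · have h1 : d' m = 0 := by simp [hd', Nat.not_le.2 hm]
      have h2 : m ∈ Finset.range N := Finset.mem_range.2 hm
      rw [h1, if_pos h2]
      simp [hd]
    · have h1 : d' m = d m := by simp [hd', Nat.le_of_not_lt hm]
      have h2 : m ∉ Finset.range N := by simpa using Nat.le_of_not_lt hm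
      rw [h1, if_neg h2]
      simp [hd]
  -- the finite dimensional subspace V
  set V : Submodule ℂ H := Submodule.span ℂ (b '' Set.Iio N) with hV
  haveI : FiniteDimensional ℂ V :=
    FiniteDimensional.span_of_finite ℂ ((Set.finite_Iio N).image b)
  haveI : CompleteSpace V := FiniteDimensional.complete ℂ V
  have hbV : ∀ n < N, (b n : H) ∈ V := fun n hn => Submodule.subset_span ⟨n, hn, rfl⟩
  have hMid : ∀ x ∈ Vᗮ, S x = x := by
    intro x hx
    have hFx : F x = 0 := by
      rw [hFapply]
      refine Finset.sum_eq_zero fun n hn => ?_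
      have h0 : (inner ℂ (b n) x : ℂ) = 0 :=
        (Submodule.mem_orthogonal V x).1 hx _ (hbV n (Finset.mem_range.1 hn))
      rw [h0, zero_smul]
    rw [hSapply, hG]
    simp [hFx]
  have hrange : LinearMap.range (S : H →ₗ[ℂ] H) = Vᗮ ⊔ V.map (S : H →ₗ[ℂ] H) := by
    apply le_antisymm
    · rintro _ ⟨x, rfl⟩
      have hx : x ∈ V ⊔ Vᗮ := by
        rw [Submodule.sup_orthogonal_of_hasOrthogonalProjection]; trivial
      rcases Submodule.mem_sup.1 hx with ⟨p, hp, m, hm, rfl⟩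
      rw [map_add, ContinuousLinearMap.coe_coe, hMid m hm]
      exact Submodule.add_mem _
        (Submodule.mem_sup_right (Submodule.mem_map_of_mem hp))
        (Submodule.mem_sup_left hm)
    · refine sup_le ?_ ?_
      · intro x hx
        exact ⟨x, hMid x hx⟩
      · rintro _ ⟨p, _, rfl⟩
        exact ⟨p, rfl⟩
  haveI : FiniteDimensional ℂ (V.map (S : H →ₗ[ℂ] H)) :=
    Module.Finite.map V (S : H →ₗ[ℂ] H)
  have hclosedS : IsClosed ((LinearMap.range (S : H →ₗ[ℂ] H) : Submodule ℂ H) : Set H) := by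
    rw [hrange]
    exact bari_isClosed_orth_sup_fd V (V.map (S : H →ₗ[ℂ] H))
  -- surjectivity
  set e₁ : H ≃L[ℂ] H := ContinuousLinearEquiv.ofUnit u with he₁def
  have he₁ : ∀ x, e₁ x = (u : H →L[ℂ] H) x := fun x => rfl
  have hSsurj : LinearMap.range (S : H →ₗ[ℂ] H) = ⊤ := by
    have hmapclosed :
        IsClosed (((LinearMap.range (S : H →ₗ[ℂ] H)).map (e₁ : H →ₗ[ℂ] H) : Submodule ℂ H) : Set H) := by
      have hcoe : (((LinearMap.range (S : H →ₗ[ℂ] H)).map (e₁ : H →ₗ[ℂ] H) : Submodule ℂ H) : Set H)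
          = e₁ '' ((LinearMap.range (S : H →ₗ[ℂ] H) : Submodule ℂ H) : Set H) := by
        ext y; simp [Submodule.mem_map]
      rw [hcoe]
      exact e₁.toHomeomorph.isClosedMap _ hclosedS
    have hspan : Submodule.span ℂ (Set.range v)
        ≤ (LinearMap.range (S : H →ₗ[ℂ] H)).map (e₁ : H →ₗ[ℂ] H) := by
      rw [Submodule.span_le]
      rintro _ ⟨n, rfl⟩
      exact ⟨S (b n), ⟨b n, rfl⟩, hTb n⟩
    have htop : (LinearMap.range (S : H →ₗ[ℂ] H)).map (e₁ : H →ₗ[ℂ] H) = ⊤ := by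
      refine le_antisymm le_top ?_
      have h1 : (Submodule.span ℂ (Set.range v)).topologicalClosure
          ≤ (LinearMap.range (S : H →ₗ[ℂ] H)).map (e₁ : H →ₗ[ℂ] H) :=
        Submodule.topologicalClosure_minimal _ hspan hmapclosed
      rwa [hcomplete] at h1
    rw [eq_top_iff]
    intro y _
    have hy : e₁ y ∈ (LinearMap.range (S : H →ₗ[ℂ] H)).map (e₁ : H →ₗ[ℂ] H) := htop ▸ trivial
    rcases hy with ⟨z, hz, hzy⟩
    have : z = y := e₁.injective hzy
    exact this ▸ hz
  -- injectivity
  set V₀ : Submodule ℂ H :=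
    (Submodule.span ℂ (d '' Set.Iio N)).map ((↑u⁻¹ : H →L[ℂ] H) : H →ₗ[ℂ] H) with hV₀
  haveI : FiniteDimensional ℂ (Submodule.span ℂ (d '' Set.Iio N)) :=
    FiniteDimensional.span_of_finite ℂ ((Set.finite_Iio N).image d)
  haveI : FiniteDimensional ℂ V₀ :=
    Module.Finite.map _ ((↑u⁻¹ : H →L[ℂ] H) : H →ₗ[ℂ] H)
  have hGx : ∀ x, G x ∈ V₀ := by
    intro x
    have hFx : F x ∈ Submodule.span ℂ (d '' Set.Iio N) := by
      rw [hFapply]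
      exact Submodule.sum_mem _ fun n hn =>
        Submodule.smul_mem _ _ (Submodule.subset_span ⟨n, Finset.mem_range.1 hn, rfl⟩)
    exact ⟨F x, hFx, rfl⟩
  have hSV₀ : ∀ w ∈ V₀, S w ∈ V₀ := by
    intro w hw
    rw [hSapply]
    exact Submodule.add_mem _ hw (hGx w)
  set Sres : V₀ →ₗ[ℂ] V₀ := (S : H →ₗ[ℂ] H).restrict hSV₀ with hSresdef
  have hSres_surj : Function.Surjective Sres := by
    rintro ⟨w, hw⟩
    have hwmem : w ∈ LinearMap.range (S : H →ₗ[ℂ] H) := hSsurj ▸ trivial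
    rcases hwmem with ⟨x, hx⟩
    have hxV₀ : x ∈ V₀ := by
      have hx2 : x = w - G x := by
        rw [← hx, ContinuousLinearMap.coe_coe, hSapply]; abel
      rw [hx2]
      exact Submodule.sub_mem _ hw (hGx x)
    exact ⟨⟨x, hxV₀⟩, Subtype.ext (by simpa [hSresdef, LinearMap.restrict_apply] using hx)⟩
  have hSres_inj : Function.Injective Sres :=
    LinearMap.injective_iff_surjective.mpr hSres_surj
  have hSker : LinearMap.ker (S : H →ₗ[ℂ] H) = ⊥ := by
    rw [eq_bot_iff]
    intro x hx
    have hx0 : S x = 0 := hx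
    have hxV₀ : x ∈ V₀ := by
      have hx2 : x = -G x := by
        have := hSapply x
        rw [hx0] at this
        linear_combination (norm := abel) -this
      rw [hx2]
      exact Submodule.neg_mem _ (hGx x)
    have h0 : Sres ⟨x, hxV₀⟩ = Sres 0 := by
      rw [map_zero]
      exact Subtype.ext (by simpa [hSresdef, LinearMap.restrict_apply] using hx0)
    have := hSres_inj h0
    simpa [Submodule.mem_bot] using congrArg Subtype.val this
  -- assemble the equivalence
  set eS : H ≃L[ℂ] H := ContinuousLinearEquiv.ofBijective S hSker hSsurj with heSdef
  refine ⟨eS.trans e₁, fun n => ?_⟩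
  have h1 : (eS.trans e₁) (b n) = e₁ (eS (b n)) := rfl
  have h2 : eS (b n) = S (b n) := by
    rw [heSdef]; rfl
  rw [h1, h2, he₁]
  exact hTb n
end

section
/- There is a constant C such that ‖E_λ‖²_φ ≤ C for all λ ∈ Λ, where ‖E_λ‖²_φ ≍ ∫_ℂ |λ| dist(z,Λ)² / ((1+|z|³)|z-λ|²) dm(z); specifically, the integral ∫_ℂ |λ| dist(z,Λ)²/((1+|z|³)|z-λ|²) dm(z) is bounded uniformly in λ ∈ Λ. -/
open MeasureTheory Complex Set

noncomputable def G1 (R : ℝ) : ℝ → ℝ := fun r => if r ≤ R/2 then 56/(R*(1+r)) else 0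
noncomputable def G2 (R : ℝ) : ℝ → ℝ := fun r => if r ≤ 2*R then 8/R^2 else 0
noncomputable def G3 (R : ℝ) : ℝ → ℝ := fun r => if r ≤ 2*R then 0 else 16*R/r^3

lemma radial_integral (g : ℝ → ℝ) :
    ∫ z : ℂ, g (‖z‖) = (2 * Real.pi) * ∫ r in Set.Ioi (0:ℝ), r * g r := by
  rw [← Complex.integral_comp_polarCoord_symm]
  have htarget : polarCoord.target = Set.Ioi (0:ℝ) ×ˢ Set.Ioo (-Real.pi) Real.pi := rfl
  rw [htarget]
  have : ∀ p ∈ Set.Ioi (0:ℝ) ×ˢ Set.Ioo (-Real.pi) Real.pi,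
      p.1 • g (‖Complex.polarCoord.symm p‖) = (p.1 * g p.1) * (1:ℝ) := by
    rintro ⟨r, t⟩ ⟨hr, -⟩
    simp [Complex.norm_polarCoord_symm, abs_of_pos (Set.mem_Ioi.1 hr)]
  rw [setIntegral_congr_fun ((measurableSet_Ioi).prod measurableSet_Ioo) this]
  rw [Measure.volume_eq_prod ℝ ℝ,
    setIntegral_prod_mul (fun r : ℝ => r * g r) (fun _ : ℝ => (1:ℝ))]
  rw [integral_const, measureReal_def, Measure.restrict_apply_univ, Real.volume_Ioo, smul_eq_mul, mul_one,
    ENNReal.toReal_ofReal (by linarith [Real.pi_pos] : (0:ℝ) ≤ Real.pi - -Real.pi)]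
  ring

lemma piece1 (R : ℝ) (hR : 0 < R) : ∫ r in Ioi (0:ℝ), r * G1 R r ≤ 28 := by
  have heq : (fun r : ℝ => r * G1 R r)
      = (Iic (R/2)).indicator (fun r => r * (56/(R*(1+r)))) := by
    funext r
    by_cases h : r ≤ R/2 <;> simp [G1, Set.indicator_apply, h]
  rw [heq, setIntegral_indicator measurableSet_Iic, Set.Ioi_inter_Iic]
  have hle : ∫ r in Ioc (0:ℝ) (R/2), r * (56/(R*(1+r))) ≤ ∫ _ in Ioc (0:ℝ) (R/2), 56/R := by
    refine integral_mono_of_nonneg ?_ ?_ ?_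
    · refine (ae_restrict_iff' measurableSet_Ioc).2 (Filter.Eventually.of_forall fun r hr => ?_)
      have : 0 < r := hr.1
      positivity
    · exact integrableOn_const measure_Ioc_lt_top.ne
    · refine (ae_restrict_iff' measurableSet_Ioc).2 (Filter.Eventually.of_forall fun r hr => ?_)
      have h0 : 0 < r := hr.1
      show r * (56/(R*(1+r))) ≤ 56/R
      rw [show r * (56/(R*(1+r))) = 56*r/(R*(1+r)) by ring,
        div_le_div_iff₀ (by positivity) hR]
      nlinarith
  refine hle.trans ?_
  rw [setIntegral_const, measureReal_def, Real.volume_Ioc, smul_eq_mul,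
    ENNReal.toReal_ofReal (by linarith : (0:ℝ) ≤ R/2 - 0)]
  rw [show (R/2 - 0) * (56/R) = 28 * (R/R) by ring, div_self hR.ne', mul_one]

lemma piece2 (R : ℝ) (hR : 0 < R) : ∫ r in Ioi (0:ℝ), r * G2 R r ≤ 16 := by
  have heq : (fun r : ℝ => r * G2 R r)
      = (Iic (2*R)).indicator (fun r => r * (8/R^2)) := by
    funext r
    by_cases h : r ≤ 2*R <;> simp [G2, Set.indicator_apply, h]
  rw [heq, setIntegral_indicator measurableSet_Iic, Set.Ioi_inter_Iic,
    ← intervalIntegral.integral_of_le (by positivity : (0:ℝ) ≤ 2*R)]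
  rw [intervalIntegral.integral_mul_const, integral_id]
  rw [show ((2*R)^2 - 0^2)/2 * (8/R^2) = 16 * (R^2/R^2) by ring,
    div_self (by positivity : (R:ℝ)^2 ≠ 0), mul_one]

lemma piece3 (R : ℝ) (hR : 0 < R) : ∫ r in Ioi (0:ℝ), r * G3 R r ≤ 8 := by
  have heq : (fun r : ℝ => r * G3 R r)
      = ((Iic (2*R))ᶜ).indicator (fun r => r * (16*R/r^3)) := by
    funext r
    by_cases h : r ≤ 2*R
    · simp [G3, Set.indicator_apply, h]
    · simp [G3, Set.indicator_apply, h, not_le.mp h]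
  rw [heq, setIntegral_indicator measurableSet_Iic.compl, Set.compl_Iic,
    Set.Ioi_inter_Ioi, max_eq_right (by positivity : (0:ℝ) ≤ 2*R)]
  have hcong : ∀ r ∈ Ioi (2*R), r * (16*R/r^3) = (16*R) * r^(-2:ℝ) := by
    intro r hr
    have h0 : 0 < r := lt_trans (by positivity) hr
    rw [Real.rpow_neg h0.le]
    have h2 : r^((2:ℕ):ℝ) = r^(2:ℕ) := Real.rpow_natCast r 2
    push_cast at h2
    rw [h2]
    field_simp
  rw [setIntegral_congr_fun measurableSet_Ioi hcong, integral_const_mul,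
    integral_Ioi_rpow_of_lt (by norm_num) (by positivity : (0:ℝ) < 2*R)]
  rw [show (-2:ℝ)+1 = -1 by norm_num, Real.rpow_neg_one]
  rw [show (16*R) * (-(2*R)⁻¹ / (-1)) = 8 * (R * R⁻¹) by ring,
    mul_inv_cancel₀ hR.ne', mul_one]

lemma G1_integrable {R : ℝ} (hR : 0 < R) : Integrable (fun z : ℂ => G1 R (‖z‖)) := by
  have e1 : (fun z : ℂ => G1 R (‖z‖)) = (Metric.closedBall (0:ℂ) (R/2)).indicator
      (fun z => 56/(R*(1+‖z‖))) := by
    funext z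
    by_cases h : ‖z‖ ≤ R/2 <;>
      simp [G1, Set.indicator_apply, mem_closedBall_zero_iff, h]
  rw [e1]
  refine (ContinuousOn.integrableOn_compact (isCompact_closedBall _ _) ?_).integrable_indicator
    measurableSet_closedBall
  exact (continuous_const.div
    (continuous_const.mul (continuous_const.add continuous_norm))
    (fun z : ℂ => (by positivity : R * (1 + ‖z‖) ≠ 0))).continuousOn

lemma G2_integrable {R : ℝ} (hR : 0 < R) : Integrable (fun z : ℂ => G2 R (‖z‖)) := by
  have e2 : (fun z : ℂ => G2 R (‖z‖)) = (Metric.closedBall (0:ℂ) (2*R)).indicator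
      (fun _ => 8/R^2) := by
    funext z
    by_cases h : ‖z‖ ≤ 2*R <;>
      simp [G2, Set.indicator_apply, mem_closedBall_zero_iff, h]
  rw [e2]
  refine (ContinuousOn.integrableOn_compact (isCompact_closedBall _ _) ?_).integrable_indicator
    measurableSet_closedBall
  exact continuousOn_const

lemma G3_nonneg {R : ℝ} (hR : 1 < R) (r : ℝ) : 0 ≤ G3 R r := by
  rw [G3]
  split_ifs with h
  · exact le_refl _
  · have h' := not_le.mp h
    have : 0 < r := by nlinarith
    positivity

lemma G3_integrable {R : ℝ} (hR : 1 < R) : Integrable (fun z : ℂ => G3 R (‖z‖)) := by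
  have hR0 : (0:ℝ) < R := by linarith
  have hdom : Integrable (fun z : ℂ => 128*R * (1+‖z‖)^(-(3:ℝ))) :=
    (integrable_one_add_norm (by rw [Complex.finrank_real_complex]; norm_num)).const_mul _
  refine hdom.mono' ?_ (Filter.Eventually.of_forall fun z => ?_)
  · have : Measurable (fun z : ℂ => G3 R (‖z‖)) := by
      apply Measurable.ite (measurableSet_le continuous_norm.measurable measurable_const)
        measurable_const
      exact measurable_const.div ((continuous_norm.measurable).pow_const 3)
    exact this.aestronglyMeasurable
  · rw [Real.norm_of_nonneg (G3_nonneg hR _), G3]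
    split_ifs with h
    · positivity
    · have hx : 2*R < ‖z‖ := not_le.mp h
      have hxn : ‖z‖ = ‖z‖ := rfl
      rw [hxn, Real.rpow_neg (by positivity)]
      have h3 : (1+‖z‖)^((3:ℕ):ℝ) = (1+‖z‖)^(3:ℕ) :=
        Real.rpow_natCast _ 3
      push_cast at h3
      rw [h3]
      have hx0 : (0:ℝ) < ‖z‖ := by linarith
      rw [show 128*R*(((1+‖z‖)^3 : ℝ))⁻¹ = 128*R/((1+‖z‖)^3) from
        (div_eq_mul_inv _ _).symm, div_le_div_iff₀ (by positivity) (by positivity)]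
      have hx1 : (1:ℝ) ≤ ‖z‖ := by nlinarith
      nlinarith [pow_le_pow_left₀ (by positivity : (0:ℝ) ≤ 1 + ‖z‖)
        (by linarith : 1 + ‖z‖ ≤ 2 * ‖z‖) 3, hR0,
        pow_pos (by linarith : (0:ℝ) < ‖z‖) 3]

lemma pointwise_bound (R a b r : ℝ) (hR : 1 < R) (ha0 : 0 ≤ a) (hb0 : 0 ≤ b) (hr0 : 0 ≤ r)
    (hab : a ≤ b) (ha2 : a ≤ r + 2) (hbl : R - r ≤ b) (hbr : r - R ≤ b) :
    R * a^2 / ((1+r^3)*b^2) ≤ G1 R r + G2 R r + G3 R r := by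
  have hR0 : (0:ℝ) < R := by linarith
  rw [G1, G2, G3]
  have hR0' : (0:ℝ) < R := hR0
  rcases eq_or_lt_of_le hb0 with hb | hb
  · rw [← hb]
    rw [show ((0:ℝ)^2 : ℝ) = 0 by ring, mul_zero, div_zero]
    have h1 : (0:ℝ) ≤ (if r ≤ R/2 then 56/(R*(1+r)) else 0) := by positivity
    have h2 : (0:ℝ) ≤ (if r ≤ 2*R then 8/R^2 else 0) := by positivity
    have h3 : (0:ℝ) ≤ (if r ≤ 2*R then 0 else 16*R/r^3) := by
      split_ifs with h
      · exact le_refl _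
      · have h' := not_le.mp h
        have : 0 < r := by nlinarith
        positivity
    linarith
  · by_cases h1 : r ≤ R/2
    · rw [if_pos h1, if_pos (by linarith), if_pos (by linarith)]
      have hbR : R/2 ≤ b := by linarith
      have key : R * a^2 / ((1+r^3)*b^2) ≤ 56/(R*(1+r)) := by
        rw [div_le_div_iff₀ (by positivity) (by positivity)]
        have ha2' : a^2 ≤ (r+2)^2 := by nlinarith
        have hb2 : (R/2)^2 ≤ b^2 := by nlinarith
        have h14 : (r+2)^2*(1+r) ≤ 14*(1+r^3) := by nlinarith [sq_nonneg (r-1), sq_nonneg r]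
        nlinarith [mul_le_mul_of_nonneg_left h14 (sq_nonneg R),
          mul_le_mul_of_nonneg_left ha2' (by positivity : (0:ℝ) ≤ R*(R*(1+r))),
          mul_le_mul_of_nonneg_left hb2 (by positivity : (0:ℝ) ≤ 56*(1+r^3))]
      have h2 : (0:ℝ) ≤ 8/R^2 := by positivity
      linarith
    · by_cases h2 : r ≤ 2*R
      · rw [if_neg h1, if_pos h2, if_pos h2]
        have hrR : R/2 < r := by linarith [not_le.mp h1]
        have key : R * a^2 / ((1+r^3)*b^2) ≤ 8/R^2 := by
          rw [div_le_div_iff₀ (by positivity) (by positivity)]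
          have ha2' : a^2 ≤ b^2 := by nlinarith
          have hr3 : (R/2)^3 ≤ r^3 := pow_le_pow_left₀ (by positivity) hrR.le 3
          nlinarith [mul_le_mul_of_nonneg_left ha2' (by positivity : (0:ℝ) ≤ R^3),
            mul_le_mul_of_nonneg_right hr3 (sq_nonneg b), sq_nonneg b, sq_nonneg a]
        have h1' : (0:ℝ) ≤ 56/(R*(1+r)) := by positivity
        linarith
      · rw [if_neg h1, if_neg h2, if_neg h2]
        have hr2R : 2*R < r := not_le.mp h2
        have hr2 : (2:ℝ) < r := by nlinarith
        have hbr2 : r/2 < b := by linarith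
        have key : R * a^2 / ((1+r^3)*b^2) ≤ 16*R/r^3 := by
          rw [div_le_div_iff₀ (by positivity) (by positivity)]
          have ha2' : a^2 ≤ (2*r)^2 := by nlinarith
          have hb2 : (r/2)^2 ≤ b^2 := by nlinarith
          nlinarith [mul_le_mul_of_nonneg_right hb2 (by positivity : (0:ℝ) ≤ 16*R*r^3),
            mul_le_mul_of_nonneg_left ha2' (by positivity : (0:ℝ) ≤ R*r^3),
            mul_pos (by positivity : (0:ℝ) < 16*R) (pow_pos (by linarith : (0:ℝ) < r) 3)]
        have h1' : (0:ℝ) ≤ 56/(R*(1+r)) := by positivity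
        linarith

/-- The integral `∫_ℂ |λ| dist(z,Λ)² / ((1+|z|³)|z-λ|²) dm(z)` is bounded uniformly
over `λ ∈ Λ`, where `Λ = {λ_n}`, `|λ_n| = e^{(n+1)/2}`; consequently `‖E_λ‖²_φ ≤ C`. -/
theorem interpolation_functions_uniformly_bounded (θ : ℕ → ℝ)
    (lam : ℕ → ℂ) (hlam : ∀ n, lam n = Complex.exp (((n + 1 : ℝ) / 2 : ℂ) + (θ n : ℂ) * Complex.I))
    (d : ℂ → ℝ) (hd : ∀ z, d z = ⨅ n : ℕ, ‖z - lam n‖) :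
    ∃ C : ℝ, 0 < C ∧ ∀ n : ℕ,
      (∫ z : ℂ, ‖lam n‖ * d z ^ 2
          / ((1 + ‖z‖ ^ 3) * ‖z - lam n‖ ^ 2)) ≤ C := by
  have habs : ∀ m : ℕ, ‖lam m‖ = Real.exp (((m:ℝ)+1)/2) := by
    intro m
    rw [hlam m, Complex.norm_exp]
    congr 1
    simp
  have habs0 : ‖lam 0‖ ≤ 2 := by
    rw [habs 0]
    have h : Real.exp (((0:ℝ)+1)/2) * Real.exp (((0:ℝ)+1)/2) = Real.exp 1 := by
      rw [← Real.exp_add]; norm_num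
    have h1 := Real.exp_one_lt_d9
    have hp := Real.exp_pos (((0:ℝ)+1)/2)
    nlinarith
  have hd0 : ∀ z, 0 ≤ d z := by
    intro z
    rw [hd]
    exact Real.iInf_nonneg fun m => norm_nonneg _
  have hdle : ∀ z m, d z ≤ ‖z - lam m‖ := by
    intro z m
    rw [hd]
    exact ciInf_le ⟨0, by rintro x ⟨k, rfl⟩; exact norm_nonneg _⟩ m
  have hd2 : ∀ z, d z ≤ ‖z‖ + 2 := by
    intro z
    refine (hdle z 0).trans ?_
    have htri : ‖z - lam 0‖ ≤ ‖z‖ + ‖lam 0‖ := by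
      simpa using norm_sub_le z (lam 0)
    linarith
  refine ⟨1000, by norm_num, fun n => ?_⟩
  set R : ℝ := Real.exp (((n:ℝ)+1)/2) with hRdef
  have hRn : ‖lam n‖ = R := habs n
  have hR1 : (1:ℝ) < R := Real.one_lt_exp_iff.2 (by positivity)
  have hR0 : (0:ℝ) < R := by linarith
  have hfg : ∀ z : ℂ, ‖lam n‖ * d z ^ 2
      / ((1 + ‖z‖ ^ 3) * ‖z - lam n‖ ^ 2)
      ≤ G1 R (‖z‖) + G2 R (‖z‖) + G3 R (‖z‖) := by
    intro z
    rw [hRn]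
    refine pointwise_bound R (d z) (‖z - lam n‖) (‖z‖) hR1 (hd0 z)
      (norm_nonneg _) (norm_nonneg _) (hdle z n) (hd2 z) ?_ ?_
    · rw [← hRn]
      have := norm_sub_norm_le (lam n) z
      rw [norm_sub_rev] at this
      simpa using this
    · rw [← hRn]
      simpa using norm_sub_norm_le z (lam n)
  have hf0 : ∀ z : ℂ, 0 ≤ ‖lam n‖ * d z ^ 2
      / ((1 + ‖z‖ ^ 3) * ‖z - lam n‖ ^ 2) := by
    intro z
    apply div_nonneg
    · exact mul_nonneg (norm_nonneg _) (sq_nonneg _)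
    · apply mul_nonneg
      · have := norm_nonneg z
        positivity
      · exact sq_nonneg _
  have hg1i := G1_integrable hR0
  have hg2i := G2_integrable hR0
  have hg3i := G3_integrable hR1
  have h12 : Integrable (fun z : ℂ => G1 R (‖z‖) + G2 R (‖z‖)) :=
    hg1i.add hg2i
  have h123 : Integrable (fun z : ℂ => G1 R (‖z‖) + G2 R (‖z‖)
      + G3 R (‖z‖)) := h12.add hg3i
  calc (∫ z : ℂ, ‖lam n‖ * d z ^ 2
          / ((1 + ‖z‖ ^ 3) * ‖z - lam n‖ ^ 2))
      ≤ ∫ z : ℂ, (G1 R (‖z‖) + G2 R (‖z‖) + G3 R (‖z‖)) :=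
        integral_mono_of_nonneg (Filter.Eventually.of_forall hf0)
          h123 (Filter.Eventually.of_forall hfg)
    _ = (∫ z : ℂ, G1 R (‖z‖)) + (∫ z : ℂ, G2 R (‖z‖))
          + (∫ z : ℂ, G3 R (‖z‖)) := by
        rw [integral_add h12 hg3i, integral_add hg1i hg2i]
    _ ≤ (2*Real.pi)*28 + (2*Real.pi)*16 + (2*Real.pi)*8 := by
        have e1 := radial_integral (G1 R)
        have e2 := radial_integral (G2 R)
        have e3 := radial_integral (G3 R)
        rw [e1, e2, e3]
        have hpi : (0:ℝ) ≤ 2*Real.pi := by positivity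
        gcongr
        · exact piece1 R hR0
        · exact piece2 R hR0
        · exact piece3 R hR0
    _ ≤ 1000 := by nlinarith [Real.pi_lt_d2, Real.pi_pos]
end
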